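/- arXiv:math/0604492 — 8 statements merged into one kernel-verified Lean document; each statement's English description precedes it below -/
import Mathlib

section
/- Let G be a discrete finitely generated group and let (X, G) be a minimal topological dynamical system containing a regularly recurrent (respectively, strongly regularly recurrent) point. Then every point of X is regularly recurrent (respectively, strongly regularly recurrent) if and only if (X, G) is conjugate — i.e., G-equivariantly homeomorphic — to a subodometer (respectively, to an odometer). -/
open Pointwise MeasureTheory

/-- Compatibility condition defining the inverse limit `lim_{←i} (G/Γᵢ, πᵢ)`:
a sequence of cosets is compatible if any representative of the `(i+1)`-th coordinate
also represents the `i`-th coordinate. -/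
def Compat {G : Type*} [Group G] (Γ : ℕ → Subgroup G) (x : ∀ i, G ⧸ Γ i) : Prop :=
  ∀ (i : ℕ) (g : G),
    (QuotientGroup.mk g : G ⧸ Γ (i + 1)) = x (i + 1) →
    (QuotientGroup.mk g : G ⧸ Γ i) = x i

/-- The subodometer `←G = lim_{←i} (G/Γᵢ, πᵢ)` associated to a sequence of subgroups. -/
def Subodometer {G : Type*} [Group G] (Γ : ℕ → Subgroup G) : Type _ :=
  { x : ∀ i, G ⧸ Γ i // Compat Γ x }

/-- Topology of the subodometer: subspace topology of the product of the (discrete)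
coset spaces. -/
instance {G : Type*} [Group G] (Γ : ℕ → Subgroup G) [TopologicalSpace G] :
    TopologicalSpace (Subodometer Γ) :=
  instTopologicalSpaceSubtype

lemma compat_smul {G : Type*} [Group G] (Γ : ℕ → Subgroup G) (g : G) (x : ∀ i, G ⧸ Γ i)
    (hx : Compat Γ x) : Compat Γ (fun i => g • x i) := by
  intro i h hh
  change (QuotientGroup.mk h : G ⧸ Γ (i + 1)) = g • x (i + 1) at hh
  show (QuotientGroup.mk h : G ⧸ Γ i) = g • x i
  obtain ⟨a, ha⟩ := QuotientGroup.mk_surjective (x (i + 1))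
  have h1 : (QuotientGroup.mk (g * a) : G ⧸ Γ (i + 1)) = g • x (i + 1) := by
    rw [← ha]; rfl
  rw [← h1] at hh
  have h2 : (QuotientGroup.mk (g⁻¹ * h) : G ⧸ Γ (i + 1)) = QuotientGroup.mk a := by
    rw [QuotientGroup.eq] at hh ⊢
    simpa [mul_assoc] using hh
  have h3 := hx i _ (h2.trans ha)
  have h4 : (QuotientGroup.mk (g * (g⁻¹ * h)) : G ⧸ Γ i) = g • x i := by
    rw [show (QuotientGroup.mk (g * (g⁻¹ * h)) : G ⧸ Γ i)
        = g • (QuotientGroup.mk (g⁻¹ * h) : G ⧸ Γ i) from rfl, h3]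
  simpa [mul_assoc] using h4

/-- The action of `G` on the subodometer by coordinatewise left multiplication. -/
instance {G : Type*} [Group G] (Γ : ℕ → Subgroup G) : MulAction G (Subodometer Γ) where
  smul g x := ⟨fun i => g • x.1 i, compat_smul Γ g x.1 x.2⟩
  one_smul x := Subtype.ext (funext fun i => one_smul G (x.1 i))
  mul_smul g h x := Subtype.ext (funext fun i => mul_smul g h (x.1 i))

/-- The distinguished point `e` of the subodometer: the sequence of cosets of the
neutral element. -/
def odoE {G : Type*} [Group G] (Γ : ℕ → Subgroup G) (hΓ : ∀ i, Γ (i + 1) ≤ Γ i) :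
    Subodometer Γ :=
  ⟨fun i => QuotientGroup.mk 1, by
    intro i g hg
    rw [QuotientGroup.eq] at hg ⊢
    exact hΓ i hg⟩

/-- The canonical map `τ : G → ←G`, `τ(g) = (gΓᵢ)ᵢ`. -/
def odoTau {G : Type*} [Group G] (Γ : ℕ → Subgroup G) (hΓ : ∀ i, Γ (i + 1) ≤ Γ i) (g : G) :
    Subodometer Γ :=
  ⟨fun i => QuotientGroup.mk g, by
    intro i h hh
    rw [QuotientGroup.eq] at hh ⊢
    exact hΓ i hh⟩

/-- The set of return times of `x` to `A`: `T_A(x) = {g ∈ G : g • x ∈ A}`. -/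
def ReturnTimes (G : Type*) {X : Type*} [SMul G X] (x : X) (A : Set X) : Set G :=
  {g : G | g • x ∈ A}

/-- A point `x` is regularly recurrent if every open neighborhood of `x` contains the
`Γ`-orbit of `x` for some finite-index subgroup `Γ` of `G`. -/
def RegularlyRecurrent (G : Type*) {X : Type*} [Group G] [TopologicalSpace X] [MulAction G X]
    (x : X) : Prop :=
  ∀ V : Set X, IsOpen V → x ∈ V →
    ∃ Γ : Subgroup G, Γ.FiniteIndex ∧ (Γ : Set G) ⊆ ReturnTimes G x V

/-- A point `x` is strongly regularly recurrent if every open neighborhood `V` of `x`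
contains a clopen neighborhood `W` of `x` whose return-time set `T_W(x)` is a
finite-index normal subgroup of `G`. -/
def StronglyRegularlyRecurrent (G : Type*) {X : Type*} [Group G] [TopologicalSpace X]
    [MulAction G X] (x : X) : Prop :=
  ∀ V : Set X, IsOpen V → x ∈ V →
    ∃ W : Set X, IsClopen W ∧ x ∈ W ∧ W ⊆ V ∧
      ∃ Γ : Subgroup G, Γ.Normal ∧ Γ.FiniteIndex ∧ ReturnTimes G x W = (Γ : Set G)



set_option linter.unusedSectionVars false

namespace S9

variable {G X : Type*} [Group G] [MetricSpace X] [CompactSpace X] [MulAction G X]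
variable (hc : ∀ g : G, Continuous fun x : X => g • x)
include hc

/-- The action of `g` as a homeomorphism. -/
noncomputable def sHomeo (g : G) : X ≃ₜ X :=
  { toEquiv := MulAction.toPerm g
    continuous_toFun := hc g
    continuous_invFun := hc g⁻¹ }

lemma sHomeo_image (g : G) (S : Set X) : (sHomeo hc g) '' S = g • S := rfl

lemma smul_closure (g : G) (S : Set X) : g • closure S = closure (g • S) := by
  rw [← sHomeo_image hc, ← sHomeo_image hc, Homeomorph.image_closure]

lemma isOpen_smul_set {S : Set X} (hS : IsOpen S) (g : G) : IsOpen (g • S) := by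
  rw [← sHomeo_image hc]; exact (Homeomorph.isOpen_image _).mpr hS

lemma isClosed_smul_set {S : Set X} (hS : IsClosed S) (g : G) : IsClosed (g • S) := by
  rw [← sHomeo_image hc]; exact (Homeomorph.isClosed_image _).mpr hS

/-- The closure of the `Γ`-orbit of `z`. -/
def orbCl (Γ : Subgroup G) (z : X) : Set X := closure ((· • z) '' (Γ : Set G))

lemma isClosed_orbCl (Γ : Subgroup G) (z : X) : IsClosed (orbCl Γ z) := isClosed_closure

lemma smul_mem_orbCl (Γ : Subgroup G) {γ : G} (hγ : γ ∈ Γ) (z : X) : γ • z ∈ orbCl Γ z :=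
  subset_closure ⟨γ, hγ, rfl⟩

lemma mem_orbCl_self (Γ : Subgroup G) (z : X) : z ∈ orbCl Γ z := by
  simpa using smul_mem_orbCl hc Γ Γ.one_mem z

lemma orbCl_mono {Λ Γ : Subgroup G} (h : Λ ≤ Γ) (z : X) : orbCl Λ z ⊆ orbCl Γ z :=
  closure_mono (Set.image_mono h)

lemma orbCl_subset_of_closed {Γ : Subgroup G} {z : X} {S : Set X} (hS : IsClosed S)
    (hz : z ∈ S) (hinv : ∀ γ ∈ Γ, γ • S ⊆ S) : orbCl Γ z ⊆ S := by
  apply closure_minimal _ hS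
  rintro w ⟨γ, hγ, rfl⟩
  exact hinv γ hγ ⟨z, hz, rfl⟩

lemma orbCl_smul_self {Γ : Subgroup G} {γ : G} (hγ : γ ∈ Γ) (z : X) :
    orbCl Γ (γ • z) = orbCl Γ z := by
  have h : ((· • (γ • z)) '' (Γ : Set G)) = ((· • z) '' (Γ : Set G)) := by
    ext w
    constructor
    · rintro ⟨δ, hδ, rfl⟩
      exact ⟨δ * γ, Γ.mul_mem hδ hγ, by simp [mul_smul]⟩
    · rintro ⟨δ, hδ, rfl⟩
      exact ⟨δ * γ⁻¹, Γ.mul_mem hδ (Γ.inv_mem hγ), by simp [mul_smul]⟩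
  rw [orbCl, orbCl, h]

lemma smul_orbCl {Γ : Subgroup G} [hN : Γ.Normal] (g : G) (z : X) :
    g • orbCl Γ z = orbCl Γ (g • z) := by
  rw [orbCl, smul_closure hc]
  have h : (g • ((· • z) '' (Γ : Set G))) = ((· • (g • z)) '' (Γ : Set G)) := by
    ext w
    constructor
    · rintro ⟨w', ⟨δ, hδ, rfl⟩, rfl⟩
      exact ⟨g * δ * g⁻¹, hN.conj_mem δ hδ g, by simp [mul_smul]⟩
    · rintro ⟨δ, hδ, rfl⟩
      refine ⟨(g⁻¹ * δ * g) • z, ⟨g⁻¹ * δ * g, ?_, rfl⟩, by simp [mul_smul]⟩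
      simpa using hN.conj_mem δ hδ g⁻¹
  rw [h, orbCl]

lemma smul_orbCl_subset {Γ : Subgroup G} {γ : G} (hγ : γ ∈ Γ) (z : X) :
    γ • orbCl Γ z ⊆ orbCl Γ z := by
  rw [orbCl, smul_closure hc]
  apply closure_minimal _ isClosed_closure
  rintro w ⟨w', ⟨δ, hδ, rfl⟩, rfl⟩
  exact subset_closure ⟨γ * δ, Γ.mul_mem hγ hδ, by simp [mul_smul]⟩

lemma exists_minimal_invariant (Γ : Subgroup G) [Nonempty X] :
    ∃ M : Set X, M.Nonempty ∧ IsClosed M ∧ (∀ γ ∈ Γ, γ • M ⊆ M) ∧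
      ∀ z ∈ M, orbCl Γ z = M := by
  set S : Set (Set X) := {A | A.Nonempty ∧ IsClosed A ∧ ∀ γ ∈ Γ, γ • A ⊆ A} with hS
  have huniv : Set.univ ∈ S := ⟨Set.univ_nonempty, isClosed_univ, fun γ _ => by simp⟩
  have hchain : ∀ c ⊆ S, IsChain (· ⊆ ·) c → c.Nonempty →
      ∃ lb ∈ S, ∀ s ∈ c, lb ⊆ s := by
    intro c hcS hch hcne
    refine ⟨⋂₀ c, ⟨?_, ?_, ?_⟩, fun s hs => Set.sInter_subset_of_mem hs⟩
    · haveI : Nonempty c := hcne.to_subtype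
      have := IsCompact.nonempty_iInter_of_directed_nonempty_isCompact_isClosed
        (fun A : c => (A : Set X))
        (fun A B => by
          rcases hch.total A.2 B.2 with h | h
          · exact ⟨A, subset_rfl, h⟩
          · exact ⟨B, h, subset_rfl⟩)
        (fun A => (hcS A.2).1)
        (fun A => (hcS A.2).2.1.isCompact)
        (fun A => (hcS A.2).2.1)
      rwa [Set.sInter_eq_iInter]
    · exact isClosed_sInter fun A hA => (hcS hA).2.1
    · intro γ hγ
      intro w hw
      rcases hw with ⟨v, hv, rfl⟩
      intro A hA
      exact (hcS hA).2.2 γ hγ ⟨v, hv A hA, rfl⟩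
  obtain ⟨M, -, hM⟩ := zorn_superset_nonempty S hchain Set.univ huniv
  refine ⟨M, hM.prop.1, hM.prop.2.1, hM.prop.2.2, ?_⟩
  intro z hz
  have hsub : orbCl Γ z ⊆ M :=
    orbCl_subset_of_closed hc hM.prop.2.1 hz hM.prop.2.2
  have hmem : orbCl Γ z ∈ S :=
    ⟨⟨z, mem_orbCl_self hc Γ z⟩, isClosed_orbCl hc Γ z, fun γ hγ => smul_orbCl_subset hc hγ z⟩
  exact subset_antisymm hsub (hM.2 hmem hsub)

variable (hmin : ∀ x : X, Dense (Set.range fun g : G => g • x))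
include hmin

lemma covering (Γ : Subgroup G) [Γ.FiniteIndex] (z y : X) :
    ∃ c : G ⧸ Γ, y ∈ (Quotient.out c) • orbCl Γ z := by
  haveI : Finite (G ⧸ Γ) := Subgroup.finite_quotient_of_finiteIndex (H := Γ)
  set U := ⋃ c : G ⧸ Γ, (Quotient.out c) • orbCl Γ z with hU
  have hUcl : IsClosed U :=
    isClosed_iUnion_of_finite fun c => isClosed_smul_set hc (isClosed_orbCl hc Γ z) _
  have hrange : Set.range (fun g : G => g • z) ⊆ U := by
    rintro w ⟨g, rfl⟩
    apply Set.mem_iUnion.mpr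
    refine ⟨QuotientGroup.mk g, ?_⟩
    set c : G ⧸ Γ := QuotientGroup.mk g
    have hout : (QuotientGroup.mk (Quotient.out c) : G ⧸ Γ) = QuotientGroup.mk g :=
      Quotient.out_eq c
    have hmem : (Quotient.out c)⁻¹ * g ∈ Γ := QuotientGroup.eq.mp hout
    refine ⟨((Quotient.out c)⁻¹ * g) • z, smul_mem_orbCl hc Γ hmem z, ?_⟩
    simp [smul_smul]
  have : U = Set.univ := by
    apply Set.eq_univ_of_univ_subset
    calc Set.univ = closure (Set.range fun g : G => g • z) := ((hmin z).closure_eq).symm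
    _ ⊆ U := closure_minimal hrange hUcl
  have hy : y ∈ U := this ▸ Set.mem_univ y
  exact Set.mem_iUnion.mp hy

lemma cell_minimal (Γ : Subgroup G) [Γ.Normal] [Γ.FiniteIndex] {z y : X}
    (hy : y ∈ orbCl Γ z) : orbCl Γ y = orbCl Γ z := by
  haveI : Nonempty X := ⟨z⟩
  obtain ⟨M, hne, hcl, hinv, hmm⟩ := exists_minimal_invariant hc Γ
  obtain ⟨m, hm⟩ := hne
  have step : ∀ (g : G) (w : X), w ∈ g • M → orbCl Γ w = g • M := by
    rintro g w ⟨v, hv, rfl⟩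
    rw [← smul_orbCl hc g v, hmm v hv]
  obtain ⟨c, hw⟩ := covering hc hmin Γ m z
  rw [hmm m hm] at hw
  have h1 : orbCl Γ z = Quotient.out c • M := step _ _ hw
  have h2 : orbCl Γ y = Quotient.out c • M := step _ _ (h1 ▸ hy)
  rw [h1, h2]

lemma cell_eq_of_mem_both (Γ : Subgroup G) [Γ.Normal] [Γ.FiniteIndex] {z w p : X}
    (h1 : p ∈ orbCl Γ z) (h2 : p ∈ orbCl Γ w) : orbCl Γ z = orbCl Γ w := by
  rw [← cell_minimal hc hmin Γ h1, ← cell_minimal hc hmin Γ h2]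

lemma cell_isOpen (Γ : Subgroup G) [Γ.Normal] [Γ.FiniteIndex] (z : X) :
    IsOpen (orbCl Γ z) := by
  haveI : Finite (G ⧸ Γ) := Subgroup.finite_quotient_of_finiteIndex (H := Γ)
  set A := orbCl Γ z with hA
  rw [← isClosed_compl_iff]
  have hcompl : Aᶜ = ⋃ c : {c : G ⧸ Γ // ¬ Quotient.out c • A = A},
      Quotient.out c.1 • A := by
    ext y
    constructor
    · intro hy
      obtain ⟨c, hcy⟩ := covering hc hmin Γ z y
      refine Set.mem_iUnion.mpr ⟨⟨c, fun he => hy (he ▸ hcy)⟩, hcy⟩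
    · intro hy hyA
      obtain ⟨⟨c, hne⟩, hyc⟩ := Set.mem_iUnion.mp hy
      apply hne
      have h1 : Quotient.out c • A = orbCl Γ (Quotient.out c • z) := smul_orbCl hc _ z
      rw [h1] at hyc ⊢
      rw [hA] at hyA ⊢
      exact cell_eq_of_mem_both hc hmin Γ hyc hyA
  rw [hcompl]
  exact isClosed_iUnion_of_finite fun c => isClosed_smul_set hc (isClosed_orbCl hc Γ z) _

lemma mem_stab_iff (Γ : Subgroup G) [Γ.Normal] [Γ.FiniteIndex] (z : X) (g : G) :
    g ∈ MulAction.stabilizer G (orbCl Γ z) ↔ g • z ∈ orbCl Γ z := by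
  constructor
  · intro h
    have : g • z ∈ g • orbCl Γ z := ⟨z, mem_orbCl_self hc Γ z, rfl⟩
    rwa [MulAction.mem_stabilizer_iff.mp h] at this
  · intro h
    rw [MulAction.mem_stabilizer_iff, smul_orbCl hc g z]
    exact cell_minimal hc hmin Γ h

lemma le_stab (Γ : Subgroup G) [Γ.Normal] [Γ.FiniteIndex] (z : X) :
    Γ ≤ MulAction.stabilizer G (orbCl Γ z) := fun γ hγ =>
  (mem_stab_iff hc hmin Γ z γ).mpr (smul_mem_orbCl hc Γ hγ z)



omit hc hmin in
lemma normal_iInf' {ι : Sort*} {f : ι → Subgroup G} (h : ∀ i, (f i).Normal) :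
    (⨅ i, f i).Normal :=
  ⟨fun n hn g => Subgroup.mem_iInf.mpr fun i => (h i).conj_mem n (Subgroup.mem_iInf.mp hn i) g⟩

lemma coverStep [Nonempty X] {ε : ℝ} (hε : 0 < ε)
    (data : ∀ z : X, ∃ Γ : Subgroup G, Γ.Normal ∧ Γ.FiniteIndex ∧
      ∀ γ ∈ Γ, γ • z ∈ Metric.ball z (ε / 4))
    (Λ₀ : Subgroup G) (h₀n : Λ₀.Normal) (h₀f : Λ₀.FiniteIndex) :
    ∃ Λ : Subgroup G, Λ.Normal ∧ Λ.FiniteIndex ∧ Λ ≤ Λ₀ ∧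
      ∀ y w : X, w ∈ orbCl Λ y → dist y w ≤ ε := by
  choose K hKn hKf hKb using data
  haveI := hKn; haveI := hKf; haveI := h₀n; haveI := h₀f
  have hCb : ∀ z : X, orbCl (K z) z ⊆ Metric.closedBall z (ε / 4) := by
    intro z
    apply closure_minimal _ Metric.isClosed_closedBall
    rintro w ⟨γ, hγ, rfl⟩
    exact Metric.ball_subset_closedBall (hKb z γ hγ)
  have hcov : (Set.univ : Set X) ⊆ ⋃ z : X, orbCl (K z) z := fun y _ =>
    Set.mem_iUnion.mpr ⟨y, mem_orbCl_self hc _ y⟩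
  obtain ⟨t, ht⟩ := isCompact_univ.elim_finite_subcover (fun z : X => orbCl (K z) z)
    (fun z => cell_isOpen hc hmin (K z) z) hcov
  refine ⟨Λ₀ ⊓ ⨅ z : t, K z, ?_, ?_, inf_le_left, ?_⟩
  · haveI : (⨅ z : t, K (z : X)).Normal := normal_iInf' fun z => hKn z
    infer_instance
  · haveI : (⨅ z : t, K (z : X)).FiniteIndex := Subgroup.finiteIndex_iInf fun z => hKf z
    infer_instance
  · intro y w hw
    have hy : y ∈ ⋃ z ∈ t, orbCl (K z) z := ht (Set.mem_univ y)
    obtain ⟨z, hzt, hyz⟩ := Set.mem_iUnion₂.mp hy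
    have hle : Λ₀ ⊓ ⨅ z : t, K (z : X) ≤ K z :=
      le_trans inf_le_right (iInf_le _ (⟨z, hzt⟩ : t))
    have hsub : orbCl (Λ₀ ⊓ ⨅ z : t, K (z : X)) y ⊆ orbCl (K z) z := by
      apply orbCl_subset_of_closed hc (isClosed_orbCl hc (K z) z) hyz
      intro γ hγ
      exact smul_orbCl_subset hc (hle hγ) z
    have h1 : dist y z ≤ ε / 4 := Metric.mem_closedBall.mp (hCb z hyz)
    have h2 : dist w z ≤ ε / 4 := Metric.mem_closedBall.mp (hCb z (hsub hw))
    calc dist y w ≤ dist y z + dist z w := dist_triangle y z w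
    _ ≤ ε / 4 + ε / 4 := by rw [dist_comm z w]; exact add_le_add h1 h2
    _ ≤ ε := by linarith

lemma stepRegular [Nonempty X] (hRR : ∀ x : X, RegularlyRecurrent G x)
    {ε : ℝ} (hε : 0 < ε) (Λ₀ : Subgroup G) (h₀n : Λ₀.Normal) (h₀f : Λ₀.FiniteIndex) :
    ∃ Λ : Subgroup G, Λ.Normal ∧ Λ.FiniteIndex ∧ Λ ≤ Λ₀ ∧
      ∀ y w : X, w ∈ orbCl Λ y → dist y w ≤ ε := by
  apply coverStep hc hmin hε _ Λ₀ h₀n h₀f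
  intro z
  obtain ⟨Γ, hΓf, hΓsub⟩ := hRR z (Metric.ball z (ε / 4)) Metric.isOpen_ball
    (Metric.mem_ball_self (by linarith))
  haveI := hΓf
  exact ⟨Γ.normalCore, inferInstance, inferInstance,
    fun γ hγ => hΓsub (Subgroup.normalCore_le Γ hγ)⟩

omit hc hmin in
lemma smul_smul_set (a b : G) (s : Set X) : a • b • s = (a * b) • s := by
  ext w
  simp [Set.mem_smul_set_iff_inv_smul_mem, mul_smul]

omit hc hmin in
lemma strong_orbit_mem {x : X} {W : Set X} {N : Subgroup G}
    (hret : ReturnTimes G x W = (N : Set G)) {γ : G} (hγ : γ ∈ N) : γ • x ∈ W := by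
  have : γ ∈ ReturnTimes G x W := by rw [hret]; exact hγ
  exact this

lemma stepStrong [Nonempty X] (hS : ∀ x : X, StronglyRegularlyRecurrent G x) (x₀ : X)
    {ε : ℝ} (hε : 0 < ε) (Λ₀ : Subgroup G) (h₀n : Λ₀.Normal) (h₀f : Λ₀.FiniteIndex) :
    ∃ N : Subgroup G, N.Normal ∧ N.FiniteIndex ∧
      orbCl N x₀ ⊆ orbCl Λ₀ x₀ ∧
      MulAction.stabilizer G (orbCl N x₀) = N ∧
      ∀ y w : X, w ∈ orbCl N y → dist y w ≤ ε := by
  obtain ⟨Λ, hΛn, hΛf, hΛle, hΛmesh⟩ : ∃ Λ : Subgroup G, Λ.Normal ∧ Λ.FiniteIndex ∧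
      Λ ≤ Λ₀ ∧ ∀ y w : X, w ∈ orbCl Λ y → dist y w ≤ ε := by
    apply coverStep hc hmin hε _ Λ₀ h₀n h₀f
    intro z
    obtain ⟨W, hWcl, hzW, hWsub, Γ, hΓn, hΓf, hΓret⟩ := hS z (Metric.ball z (ε / 4))
      Metric.isOpen_ball (Metric.mem_ball_self (by linarith))
    exact ⟨Γ, hΓn, hΓf, fun γ hγ => hWsub (strong_orbit_mem hΓret hγ)⟩
  haveI := hΛn; haveI := hΛf
  set D := orbCl Λ x₀ with hD
  obtain ⟨W', hW'cl, hxW', hW'sub, N, hNn, hNf, hNret⟩ := hS x₀ D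
    (cell_isOpen hc hmin Λ x₀) (mem_orbCl_self hc Λ x₀)
  haveI := hNn; haveI := hNf
  have hCNW' : orbCl N x₀ ⊆ W' := by
    apply closure_minimal _ hW'cl.isClosed
    rintro w ⟨γ, hγ, rfl⟩
    exact strong_orbit_mem hNret hγ
  have hCD : orbCl N x₀ ⊆ D := hCNW'.trans hW'sub
  have hstabD : ∀ γ ∈ N, γ • D = D := by
    intro γ hγ
    have : γ • x₀ ∈ D := hCD (smul_mem_orbCl hc N hγ x₀)
    rw [hD, smul_orbCl hc γ x₀]
    exact cell_minimal hc hmin Λ this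
  refine ⟨N, hNn, hNf, hCD.trans (orbCl_mono hc hΛle x₀), ?_, ?_⟩
  · apply le_antisymm
    · intro g hg
      have : g • x₀ ∈ orbCl N x₀ := (mem_stab_iff hc hmin N x₀ g).mp hg
      have : g ∈ ReturnTimes G x₀ W' := hCNW' this
      rwa [hNret] at this
    · exact le_stab hc hmin N x₀
  · intro y w hw
    obtain ⟨c, hyc⟩ := covering hc hmin Λ x₀ y
    set g := Quotient.out c with hg
    have hE : g • D = orbCl Λ (g • x₀) := smul_orbCl hc g x₀
    have hNE : ∀ γ ∈ N, γ • (g • D) ⊆ g • D := by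
      intro γ hγ
      have h1 : γ • (g • D) = (g * (g⁻¹ * γ * g)) • D := by
        rw [smul_smul_set]
        congr 1
        group
      have hγ' : g⁻¹ * γ * g ∈ N := by simpa using hNn.conj_mem γ hγ g⁻¹
      rw [h1, ← smul_smul_set, hstabD _ hγ']
    have hsub : orbCl N y ⊆ g • D :=
      orbCl_subset_of_closed hc (isClosed_smul_set hc (isClosed_orbCl hc Λ x₀) g) hyc hNE
    have hwE : w ∈ orbCl Λ (g • x₀) := hE ▸ hsub hw
    have hyE : y ∈ orbCl Λ (g • x₀) := hE ▸ hyc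
    have : orbCl Λ y = orbCl Λ (g • x₀) := cell_minimal hc hmin Λ hyE
    exact hΛmesh y w (this ▸ hwE)


omit hc hmin in
lemma discreteQuot [TopologicalSpace G] [DiscreteTopology G] (Γ : Subgroup G) :
    DiscreteTopology (G ⧸ Γ) :=
  discreteTopology_iff_forall_isOpen.mpr fun _ => isOpen_coinduced.mpr (isOpen_discrete _)

section machine

variable [TopologicalSpace G] [DiscreteTopology G]
variable (x₀ : X) (W : ℕ → Set X)
variable (hx₀ : ∀ n, x₀ ∈ W n)
variable (hsub : ∀ n, W (n + 1) ⊆ W n)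
variable (hcl : ∀ n, IsClosed (W n))
variable (hop : ∀ n, IsOpen (W n))
variable (hcov : ∀ n (y : X), ∃ g : G, y ∈ g • W n)
variable (hdisj : ∀ n (g h : G), (g • W n ∩ h • W n).Nonempty → g • W n = h • W n)

omit hc hmin

lemma translate_eq_iff (n : ℕ) (g h : G) :
    g • W n = h • W n ↔
      (QuotientGroup.mk g : G ⧸ MulAction.stabilizer G (W n)) = QuotientGroup.mk h := by
  rw [QuotientGroup.eq]
  constructor
  · intro he
    have : (g⁻¹ * h) • W n = W n := by
      rw [← smul_smul_set, ← he, smul_smul_set]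
      simp
    exact MulAction.mem_stabilizer_iff.mpr this
  · intro hm
    have : (g⁻¹ * h) • W n = W n := MulAction.mem_stabilizer_iff.mp hm
    calc g • W n = g • ((g⁻¹ * h) • W n) := by rw [this]
    _ = h • W n := by rw [smul_smul_set]; congr 1; group

include hdisj in
lemma code_uniq (n : ℕ) (g h : G) {y : X} (hg : y ∈ g • W n) (hh : y ∈ h • W n) :
    (QuotientGroup.mk g : G ⧸ MulAction.stabilizer G (W n)) = QuotientGroup.mk h :=
  (translate_eq_iff W n g h).mp (hdisj n g h ⟨y, hg, hh⟩)

/-- The coding map into the quotients. -/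
noncomputable def code (y : X) (n : ℕ) : G ⧸ MulAction.stabilizer G (W n) :=
  QuotientGroup.mk (hcov n y).choose

include hdisj in
lemma code_eq_iff (y : X) (n : ℕ) (g : G) :
    code W hcov y n = QuotientGroup.mk g ↔ y ∈ g • W n := by
  constructor
  · intro h
    have hy := (hcov n y).choose_spec
    have := (translate_eq_iff W n _ g).mpr h
    rwa [this] at hy
  · intro h
    exact code_uniq W hdisj n _ g (hcov n y).choose_spec h

include hdisj hsub in
lemma code_compat (y : X) : Compat (fun n => MulAction.stabilizer G (W n)) (code W hcov y) := by
  intro i g hg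
  have : y ∈ g • W (i + 1) := (code_eq_iff W hcov hdisj y (i + 1) g).mp hg.symm
  have : y ∈ g • W i := Set.smul_set_mono (hsub i) this
  exact ((code_eq_iff W hcov hdisj y i g).mpr this).symm

/-- The conjugacy map. -/
noncomputable def phi0 (y : X) : Subodometer (fun n => MulAction.stabilizer G (W n)) :=
  ⟨code W hcov y, code_compat W hsub hcov hdisj y⟩

include hdisj in
lemma code_equivariant (g : G) (y : X) (n : ℕ) :
    code W hcov (g • y) n = g • code W hcov y n := by
  have hy := (hcov n y).choose_spec
  set ch := (hcov n y).choose
  have h1 : g • y ∈ (g * ch) • W n := by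
    rw [← smul_smul_set]
    exact ⟨y, hy, rfl⟩
  have h2 : code W hcov (g • y) n = QuotientGroup.mk (g * ch) :=
    (code_eq_iff W hcov hdisj (g • y) n _).mpr h1
  rw [h2]
  rfl

end machine

section machine2

variable [TopologicalSpace G] [DiscreteTopology G]
variable (x₀ : X) (W : ℕ → Set X)

include hc hmin in
lemma machine (hx₀ : ∀ n, x₀ ∈ W n)
    (hsub : ∀ n, W (n + 1) ⊆ W n)
    (hcl : ∀ n, IsClosed (W n))
    (hop : ∀ n, IsOpen (W n))
    (hcov : ∀ n (y : X), ∃ g : G, y ∈ g • W n)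
    (hdisj : ∀ n (g h : G), (g • W n ∩ h • W n).Nonempty → g • W n = h • W n)
    (hsmall : ∀ (n : ℕ) (g : G) (y w : X),
      y ∈ g • W n → w ∈ g • W n → dist y w ≤ 1 / ((n : ℝ) + 1)) :
    ∃ φ : X ≃ₜ Subodometer (fun n => MulAction.stabilizer G (W n)),
      ∀ (g : G) (x : X), φ (g • x) = g • φ x := by
  haveI : ∀ n, DiscreteTopology (G ⧸ MulAction.stabilizer G (W n)) := fun n => discreteQuot _
  haveI : ∀ n, T2Space (G ⧸ MulAction.stabilizer G (W n)) := fun n => inferInstance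
  haveI : T2Space (Subodometer (fun n => MulAction.stabilizer G (W n))) :=
    inferInstanceAs (T2Space {x : ∀ n, G ⧸ MulAction.stabilizer G (W n) // Compat _ x})
  -- injectivity
  have hinj : Function.Injective (phi0 W hsub hcov hdisj) := by
    intro y z h
    have hcode : ∀ n, code W hcov y n = code W hcov z n := fun n =>
      congrFun (congrArg Subtype.val h) n
    have hdist : ∀ n : ℕ, dist y z ≤ 1 / ((n : ℝ) + 1) := by
      intro n
      have hy := (hcov n y).choose_spec
      have hz : z ∈ (hcov n y).choose • W n := by
        apply (code_eq_iff W hcov hdisj z n _).mp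
        rw [← hcode n]
        rfl
      exact hsmall n _ y z hy hz
    by_contra hne
    have hpos : 0 < dist y z := dist_pos.mpr fun he => hne (by rw [he])
    obtain ⟨n, hn⟩ := exists_nat_one_div_lt hpos
    exact absurd (hdist n) (not_le.mpr hn)
  -- surjectivity
  have hsurj : Function.Surjective (phi0 W hsub hcov hdisj) := by
    intro x
    set A : ℕ → Set X := fun n => (Quotient.out (x.1 n)) • W n with hA
    have hnested : ∀ n, A (n + 1) ⊆ A n := by
      intro n
      have h1 : (QuotientGroup.mk (Quotient.out (x.1 (n + 1))) :
          G ⧸ MulAction.stabilizer G (W (n + 1))) = x.1 (n + 1) := Quotient.out_eq _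
      have h2 : (QuotientGroup.mk (Quotient.out (x.1 (n + 1))) :
          G ⧸ MulAction.stabilizer G (W n)) = x.1 n := x.2 n _ h1
      have h3 : (QuotientGroup.mk (Quotient.out (x.1 n)) :
          G ⧸ MulAction.stabilizer G (W n)) = x.1 n := Quotient.out_eq _
      have h4 : Quotient.out (x.1 (n + 1)) • W n = Quotient.out (x.1 n) • W n :=
        (translate_eq_iff W n _ _).mpr (h2.trans h3.symm)
      calc A (n + 1) ⊆ Quotient.out (x.1 (n + 1)) • W n := Set.smul_set_mono (hsub n)
      _ = A n := h4
    have hAne : ∀ n, (A n).Nonempty := fun n => ⟨_, ⟨x₀, hx₀ n, rfl⟩⟩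
    have hAcl : ∀ n, IsClosed (A n) := fun n => isClosed_smul_set hc (hcl n) _
    obtain ⟨y, hy⟩ := IsCompact.nonempty_iInter_of_sequence_nonempty_isCompact_isClosed
      A hnested hAne ((hAcl 0).isCompact) hAcl
    refine ⟨y, ?_⟩
    apply Subtype.ext
    funext n
    have hyn : y ∈ Quotient.out (x.1 n) • W n := Set.mem_iInter.mp hy n
    calc (phi0 W hsub hcov hdisj y).1 n = QuotientGroup.mk (Quotient.out (x.1 n)) :=
      (code_eq_iff W hcov hdisj y n _).mpr hyn
    _ = x.1 n := Quotient.out_eq _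
  -- continuity
  have hcont : Continuous (phi0 W hsub hcov hdisj) := by
    apply Continuous.subtype_mk
    apply continuous_pi
    intro n
    rw [continuous_discrete_rng]
    intro b
    induction b using QuotientGroup.induction_on with
    | H g =>
      have : (fun y => code W hcov y n) ⁻¹' {QuotientGroup.mk g} = g • W n := by
        ext y
        simp only [Set.mem_preimage, Set.mem_singleton_iff]
        exact code_eq_iff W hcov hdisj y n g
      rw [this]
      exact isOpen_smul_set hc (hop n) g
  set e : X ≃ Subodometer (fun n => MulAction.stabilizer G (W n)) :=
    Equiv.ofBijective _ ⟨hinj, hsurj⟩ with he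
  refine ⟨hcont.homeoOfEquivCompactToT2 (f := e), ?_⟩
  intro g x
  show e (g • x) = g • e x
  apply Subtype.ext
  funext n
  show code W hcov (g • x) n = (g • e x).1 n
  rw [code_equivariant W hcov hdisj g x n]
  rfl

end machine2


section forward

variable [TopologicalSpace G] [DiscreteTopology G]

include hc hmin in
lemma forwardRegular (x₀ : X) (hRR : ∀ x : X, RegularlyRecurrent G x) :
    ∃ Γ : ℕ → Subgroup G, (∀ i, (Γ i).FiniteIndex) ∧ (∀ i, Γ (i + 1) ≤ Γ i) ∧
      ∃ φ : X ≃ₜ Subodometer Γ, ∀ (g : G) (x : X), φ (g • x) = g • φ x := by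
  haveI : Nonempty X := ⟨x₀⟩
  have key : ∀ (n : ℕ) (Λ₀ : {Λ : Subgroup G // Λ.Normal ∧ Λ.FiniteIndex}),
      ∃ Λ : {Λ : Subgroup G // Λ.Normal ∧ Λ.FiniteIndex}, Λ.1 ≤ Λ₀.1 ∧
        ∀ y w : X, w ∈ orbCl Λ.1 y → dist y w ≤ 1 / ((n : ℝ) + 1) := by
    intro n Λ₀
    obtain ⟨Λ, h1, h2, h3, h4⟩ := stepRegular hc hmin hRR
      (ε := 1 / ((n : ℝ) + 1)) (by positivity) Λ₀.1 Λ₀.2.1 Λ₀.2.2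
    exact ⟨⟨Λ, h1, h2⟩, h3, h4⟩
  choose St hle hmesh using key
  set F : ℕ → {Λ : Subgroup G // Λ.Normal ∧ Λ.FiniteIndex} :=
    fun n => Nat.rec (St 0 ⟨⊤, inferInstance, inferInstance⟩) (fun m p => St (m + 1) p) n
    with hF
  have hmeshF : ∀ n, ∀ y w : X, w ∈ orbCl (F n).1 y → dist y w ≤ 1 / ((n : ℝ) + 1) := by
    intro n
    cases n with
    | zero => exact hmesh 0 _
    | succ m => exact hmesh (m + 1) (F m)
  have hleF : ∀ n, (F (n + 1)).1 ≤ (F n).1 := fun n => hle (n + 1) (F n)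
  set Wn : ℕ → Set X := fun n => orbCl (F n).1 x₀ with hWn
  have hWsub : ∀ n, Wn (n + 1) ⊆ Wn n := fun n => orbCl_mono hc (hleF n) x₀
  have hWcl : ∀ n, IsClosed (Wn n) := fun n => isClosed_orbCl hc _ x₀
  have hWop : ∀ n, IsOpen (Wn n) := by
    intro n
    haveI := (F n).2.1; haveI := (F n).2.2
    exact cell_isOpen hc hmin _ x₀
  have hWx₀ : ∀ n, x₀ ∈ Wn n := fun n => mem_orbCl_self hc _ x₀
  have hWcov : ∀ n (y : X), ∃ g : G, y ∈ g • Wn n := by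
    intro n y
    haveI := (F n).2.1; haveI := (F n).2.2
    obtain ⟨c, hcy⟩ := covering hc hmin (F n).1 x₀ y
    exact ⟨Quotient.out c, hcy⟩
  have hWdisj : ∀ n (g h : G), (g • Wn n ∩ h • Wn n).Nonempty → g • Wn n = h • Wn n := by
    intro n g h ⟨p, hpg, hph⟩
    haveI := (F n).2.1; haveI := (F n).2.2
    rw [hWn] at hpg hph ⊢
    rw [smul_orbCl hc g x₀] at hpg ⊢
    rw [smul_orbCl hc h x₀] at hph ⊢
    exact cell_eq_of_mem_both hc hmin _ hpg hph
  have hWsmall : ∀ (n : ℕ) (g : G) (y w : X),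
      y ∈ g • Wn n → w ∈ g • Wn n → dist y w ≤ 1 / ((n : ℝ) + 1) := by
    intro n g y w hy hw
    haveI := (F n).2.1; haveI := (F n).2.2
    rw [hWn, smul_orbCl hc g x₀] at hy hw
    have : orbCl (F n).1 y = orbCl (F n).1 (g • x₀) := cell_minimal hc hmin _ hy
    exact hmeshF n y w (this ▸ hw)
  obtain ⟨φ, hφ⟩ := machine hc hmin x₀ Wn hWx₀ hWsub hWcl hWop hWcov hWdisj hWsmall
  refine ⟨fun n => MulAction.stabilizer G (Wn n), ?_, ?_, φ, hφ⟩
  · intro n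
    haveI := (F n).2.1; haveI := (F n).2.2
    exact Subgroup.finiteIndex_of_le (le_stab hc hmin (F n).1 x₀)
  · intro n g hg
    haveI := (F n).2.1; haveI := (F n).2.2
    haveI := (F (n + 1)).2.1; haveI := (F (n + 1)).2.2
    have h1 : g • x₀ ∈ Wn (n + 1) := (mem_stab_iff hc hmin (F (n + 1)).1 x₀ g).mp hg
    exact (mem_stab_iff hc hmin (F n).1 x₀ g).mpr (hWsub n h1)

include hc hmin in
lemma forwardStrong (x₀ : X) (hS : ∀ x : X, StronglyRegularlyRecurrent G x) :
    ∃ Γ : ℕ → Subgroup G, (∀ i, (Γ i).Normal) ∧ (∀ i, (Γ i).FiniteIndex) ∧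
      (∀ i, Γ (i + 1) ≤ Γ i) ∧
      ∃ φ : X ≃ₜ Subodometer Γ, ∀ (g : G) (x : X), φ (g • x) = g • φ x := by
  haveI : Nonempty X := ⟨x₀⟩
  have key : ∀ (n : ℕ) (Λ₀ : {Λ : Subgroup G // Λ.Normal ∧ Λ.FiniteIndex}),
      ∃ Λ : {Λ : Subgroup G // Λ.Normal ∧ Λ.FiniteIndex},
        orbCl Λ.1 x₀ ⊆ orbCl Λ₀.1 x₀ ∧
        MulAction.stabilizer G (orbCl Λ.1 x₀) = Λ.1 ∧
        ∀ y w : X, w ∈ orbCl Λ.1 y → dist y w ≤ 1 / ((n : ℝ) + 1) := by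
    intro n Λ₀
    obtain ⟨Λ, h1, h2, h3, h4, h5⟩ := stepStrong hc hmin hS x₀
      (ε := 1 / ((n : ℝ) + 1)) (by positivity) Λ₀.1 Λ₀.2.1 Λ₀.2.2
    exact ⟨⟨Λ, h1, h2⟩, h3, h4, h5⟩
  choose St hsubSt hstabSt hmesh using key
  set F : ℕ → {Λ : Subgroup G // Λ.Normal ∧ Λ.FiniteIndex} :=
    fun n => Nat.rec (St 0 ⟨⊤, inferInstance, inferInstance⟩) (fun m p => St (m + 1) p) n
    with hF
  have hmeshF : ∀ n, ∀ y w : X, w ∈ orbCl (F n).1 y → dist y w ≤ 1 / ((n : ℝ) + 1) := by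
    intro n
    cases n with
    | zero => exact hmesh 0 _
    | succ m => exact hmesh (m + 1) (F m)
  have hstabF : ∀ n, MulAction.stabilizer G (orbCl (F n).1 x₀) = (F n).1 := by
    intro n
    cases n with
    | zero => exact hstabSt 0 _
    | succ m => exact hstabSt (m + 1) (F m)
  have hsubF : ∀ n, orbCl (F (n + 1)).1 x₀ ⊆ orbCl (F n).1 x₀ := fun n =>
    hsubSt (n + 1) (F n)
  set Wn : ℕ → Set X := fun n => orbCl (F n).1 x₀ with hWn
  have hWcl : ∀ n, IsClosed (Wn n) := fun n => isClosed_orbCl hc _ x₀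
  have hWop : ∀ n, IsOpen (Wn n) := by
    intro n
    haveI := (F n).2.1; haveI := (F n).2.2
    exact cell_isOpen hc hmin _ x₀
  have hWx₀ : ∀ n, x₀ ∈ Wn n := fun n => mem_orbCl_self hc _ x₀
  have hWcov : ∀ n (y : X), ∃ g : G, y ∈ g • Wn n := by
    intro n y
    haveI := (F n).2.1; haveI := (F n).2.2
    obtain ⟨c, hcy⟩ := covering hc hmin (F n).1 x₀ y
    exact ⟨Quotient.out c, hcy⟩
  have hWdisj : ∀ n (g h : G), (g • Wn n ∩ h • Wn n).Nonempty → g • Wn n = h • Wn n := by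
    intro n g h ⟨p, hpg, hph⟩
    haveI := (F n).2.1; haveI := (F n).2.2
    rw [hWn] at hpg hph ⊢
    rw [smul_orbCl hc g x₀] at hpg ⊢
    rw [smul_orbCl hc h x₀] at hph ⊢
    exact cell_eq_of_mem_both hc hmin _ hpg hph
  have hWsmall : ∀ (n : ℕ) (g : G) (y w : X),
      y ∈ g • Wn n → w ∈ g • Wn n → dist y w ≤ 1 / ((n : ℝ) + 1) := by
    intro n g y w hy hw
    haveI := (F n).2.1; haveI := (F n).2.2
    rw [hWn, smul_orbCl hc g x₀] at hy hw
    have : orbCl (F n).1 y = orbCl (F n).1 (g • x₀) := cell_minimal hc hmin _ hy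
    exact hmeshF n y w (this ▸ hw)
  obtain ⟨φ, hφ⟩ := machine hc hmin x₀ Wn hWx₀ hsubF hWcl hWop hWcov hWdisj hWsmall
  refine ⟨fun n => MulAction.stabilizer G (Wn n), ?_, ?_, ?_, φ, hφ⟩
  · intro n
    show (MulAction.stabilizer G (orbCl (F n).1 x₀)).Normal
    rw [hstabF n]
    exact (F n).2.1
  · intro n
    show (MulAction.stabilizer G (orbCl (F n).1 x₀)).FiniteIndex
    rw [hstabF n]
    exact (F n).2.2
  · intro n g hg
    haveI := (F n).2.1; haveI := (F n).2.2
    haveI := (F (n + 1)).2.1; haveI := (F (n + 1)).2.2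
    have h1 : g • x₀ ∈ Wn (n + 1) := (mem_stab_iff hc hmin (F (n + 1)).1 x₀ g).mp hg
    exact (mem_stab_iff hc hmin (F n).1 x₀ g).mpr (hsubF n h1)

end forward


section backward

omit hc hmin

lemma descent {Γ : ℕ → Subgroup G} (y p : Subodometer Γ)
    (hstep : ∀ k, y.1 (k + 1) = p.1 (k + 1) → y.1 k = p.1 k) :
    ∀ n i, i ≤ n → y.1 n = p.1 n → y.1 i = p.1 i := by
  intro n
  induction n with
  | zero =>
    intro i hi he
    rw [Nat.le_zero.mp hi]
    exact he
  | succ m ih =>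
    intro i hi he
    rcases Nat.lt_succ_iff_lt_or_eq.mp (Nat.lt_succ_of_le hi) with h | h
    · exact ih i (Nat.lt_succ_iff.mp h) (hstep m he)
    · rw [h]; exact he

lemma coord_step {Γ : ℕ → Subgroup G} (y p : Subodometer Γ) (k : ℕ)
    (he : y.1 (k + 1) = p.1 (k + 1)) : y.1 k = p.1 k := by
  obtain ⟨g, hg⟩ := QuotientGroup.mk_surjective (y.1 (k + 1))
  have h1 : (QuotientGroup.mk g : G ⧸ Γ k) = y.1 k := y.2 k g hg
  have h2 : (QuotientGroup.mk g : G ⧸ Γ k) = p.1 k := p.2 k g (hg.trans he)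
  rw [← h1, h2]

variable [TopologicalSpace G] [DiscreteTopology G]

lemma cylinder_subset (Γ : ℕ → Subgroup G) {U : Set (Subodometer Γ)}
    (hU : IsOpen U) {p : Subodometer Γ} (hp : p ∈ U) :
    ∃ n, {y : Subodometer Γ | y.1 n = p.1 n} ⊆ U := by
  obtain ⟨V, hVop, hVeq⟩ := isOpen_induced_iff.mp hU
  have hpV : p.1 ∈ V := by rw [← hVeq] at hp; exact hp
  obtain ⟨I, u, hu, hIsub⟩ := isOpen_pi_iff.mp hVop p.1 hpV
  refine ⟨I.sup id, ?_⟩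
  intro y hy
  have hcoord : ∀ i ∈ I, y.1 i = p.1 i := by
    intro i hi
    exact descent y p (coord_step y p) (I.sup id) i (Finset.le_sup (f := id) hi) hy
  have : y.1 ∈ (↑I : Set ℕ).pi u := by
    intro i hi
    rw [hcoord i hi]
    exact (hu i hi).2
  have : y.1 ∈ V := hIsub this
  rw [← hVeq]
  exact this

lemma stab_coset_finiteIndex (Γ : Subgroup G) [Γ.FiniteIndex] (q : G ⧸ Γ) :
    (MulAction.stabilizer G q).FiniteIndex := by
  haveI : Finite (G ⧸ Γ) := Subgroup.finite_quotient_of_finiteIndex (H := Γ)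
  haveI : Finite (MulAction.orbit G q) := Subtype.finite
  haveI : Finite (G ⧸ MulAction.stabilizer G q) :=
    Finite.of_equiv _ (MulAction.orbitEquivQuotientStabilizer G q)
  exact Subgroup.finiteIndex_of_finite_quotient (H := _)

lemma stab_coset_eq (Γ : Subgroup G) [hN : Γ.Normal] (q : G ⧸ Γ) :
    MulAction.stabilizer G q = Γ := by
  obtain ⟨g₀, rfl⟩ := QuotientGroup.mk_surjective q
  ext g
  rw [MulAction.mem_stabilizer_iff]
  show (QuotientGroup.mk (g * g₀) : G ⧸ Γ) = QuotientGroup.mk g₀ ↔ g ∈ Γ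
  rw [QuotientGroup.eq]
  constructor
  · intro h
    have h2 := hN.conj_mem _ h g₀
    have h3 : g₀ * ((g * g₀)⁻¹ * g₀) * g₀⁻¹ = g⁻¹ := by group
    rw [h3] at h2
    exact (Subgroup.inv_mem_iff Γ).mp h2
  · intro h
    have h2 := hN.conj_mem _ ((Subgroup.inv_mem_iff Γ).mpr h) g₀⁻¹
    have h3 : g₀⁻¹ * g⁻¹ * g₀⁻¹⁻¹ = (g * g₀)⁻¹ * g₀ := by group
    rw [h3] at h2
    exact h2

lemma backwardRegular (Γ : ℕ → Subgroup G) (hfin : ∀ i, (Γ i).FiniteIndex)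
    (φ : X ≃ₜ Subodometer Γ) (hφ : ∀ (g : G) (x : X), φ (g • x) = g • φ x) (x : X) :
    RegularlyRecurrent G x := by
  intro V hV hxV
  have hU : IsOpen (φ '' V) := (Homeomorph.isOpen_image φ).mpr hV
  obtain ⟨n, hcyl⟩ := cylinder_subset Γ hU ⟨x, hxV, rfl⟩
  haveI := hfin n
  refine ⟨MulAction.stabilizer G ((φ x).1 n), stab_coset_finiteIndex _ _, ?_⟩
  intro g hg
  show g • x ∈ V
  have h1 : (g • φ x).1 n = (φ x).1 n := MulAction.mem_stabilizer_iff.mp hg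
  have h2 : g • φ x ∈ φ '' V := hcyl h1
  obtain ⟨v, hvV, hveq⟩ := h2
  rw [← hφ g x] at hveq
  rwa [← φ.injective hveq]

lemma backwardStrong (Γ : ℕ → Subgroup G) (hnor : ∀ i, (Γ i).Normal)
    (hfin : ∀ i, (Γ i).FiniteIndex)
    (φ : X ≃ₜ Subodometer Γ) (hφ : ∀ (g : G) (x : X), φ (g • x) = g • φ x) (x : X) :
    StronglyRegularlyRecurrent G x := by
  intro V hV hxV
  have hU : IsOpen (φ '' V) := (Homeomorph.isOpen_image φ).mpr hV
  obtain ⟨n, hcyl⟩ := cylinder_subset Γ hU ⟨x, hxV, rfl⟩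
  haveI : DiscreteTopology (G ⧸ Γ n) := discreteQuot _
  have hcylclopen : IsClopen {y : Subodometer Γ | y.1 n = (φ x).1 n} := by
    have hcont : Continuous (fun y : Subodometer Γ => y.1 n) :=
      (continuous_apply n).comp continuous_subtype_val
    have := (isClopen_discrete {(φ x).1 n}).preimage hcont
    convert this using 1
    rfl
  refine ⟨φ ⁻¹' {y : Subodometer Γ | y.1 n = (φ x).1 n},
    hcylclopen.preimage φ.continuous, ?_, ?_, Γ n, hnor n, hfin n, ?_⟩
  · show (φ x).1 n = (φ x).1 n
    rfl
  · intro y hy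
    have h2 : φ y ∈ φ '' V := hcyl hy
    obtain ⟨v, hvV, hveq⟩ := h2
    rwa [← φ.injective hveq]
  · ext g
    show g • x ∈ φ ⁻¹' _ ↔ g ∈ Γ n
    have h1 : (φ (g • x)).1 n = (g • φ x).1 n := by rw [hφ g x]
    constructor
    · intro h
      have h2 : (g • φ x).1 n = (φ x).1 n := by rw [← h1]; exact h
      have h3 : g ∈ MulAction.stabilizer G ((φ x).1 n) :=
        MulAction.mem_stabilizer_iff.mpr h2
      haveI := hnor n
      rwa [stab_coset_eq (Γ n) ((φ x).1 n)] at h3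
    · intro h
      show (φ (g • x)).1 n = (φ x).1 n
      rw [h1]
      haveI := hnor n
      have h3 : g ∈ MulAction.stabilizer G ((φ x).1 n) := by
        rw [stab_coset_eq (Γ n) ((φ x).1 n)]
        exact h
      exact MulAction.mem_stabilizer_iff.mp h3

end backward

end S9

/-- in a minimal system containing a (strongly) regularly recurrent
point, every point is (strongly) regularly recurrent iff the system is conjugate to a
subodometer (an odometer). -/
theorem statement9 {G X : Type*} [Group G] [Group.FG G] [TopologicalSpace G]
    [DiscreteTopology G] [MetricSpace X] [CompactSpace X] [MulAction G X]
    (hc : ∀ g : G, Continuous fun x : X => g • x)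
    (hmin : ∀ x : X, Dense (Set.range fun g : G => g • x)) :
    ((∃ x : X, RegularlyRecurrent G x) →
      ((∀ x : X, RegularlyRecurrent G x) ↔
        ∃ Γ : ℕ → Subgroup G, (∀ i, (Γ i).FiniteIndex) ∧ (∀ i, Γ (i + 1) ≤ Γ i) ∧
          ∃ φ : X ≃ₜ Subodometer Γ, ∀ (g : G) (x : X), φ (g • x) = g • φ x)) ∧
    ((∃ x : X, StronglyRegularlyRecurrent G x) →
      ((∀ x : X, StronglyRegularlyRecurrent G x) ↔
        ∃ Γ : ℕ → Subgroup G, (∀ i, (Γ i).Normal) ∧ (∀ i, (Γ i).FiniteIndex) ∧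
          (∀ i, Γ (i + 1) ≤ Γ i) ∧
          ∃ φ : X ≃ₜ Subodometer Γ, ∀ (g : G) (x : X), φ (g • x) = g • φ x)) := by
  constructor
  · rintro ⟨x, -⟩
    constructor
    · intro hall
      exact S9.forwardRegular hc hmin x hall
    · rintro ⟨Γ, hfin, -, φ, hφ⟩ x'
      exact S9.backwardRegular Γ hfin φ hφ x'
  · rintro ⟨x, -⟩
    constructor
    · intro hall
      exact S9.forwardStrong hc hmin x hall
    · rintro ⟨Γ, hnor, hfin, -, φ, hφ⟩ x'
      exact S9.backwardStrong Γ hnor hfin φ hφ x'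
end

section
/- A discrete finitely generated group G admits a free action by homeomorphisms on a compact metric space X such that some point of X is strongly regularly recurrent with dense G-orbit (i.e., G admits a free strongly regularly recurrent action) if and only if G is residually finite. -/
open Pointwise MeasureTheory

theorem srr_forward {G : Type*} [Group G] {X : Type} [MetricSpace X] [MulAction G X]
    (hfree : ∀ (g : G) (x : X), g • x = x → g = 1)
    {x : X} (hsrr : StronglyRegularlyRecurrent G x) :
    ∃ Γ : ℕ → Subgroup G,
        (∀ n, Γ (n + 1) ≤ Γ n) ∧ (∀ n, (Γ n).FiniteIndex) ∧
        (⋂ n, ((Γ n : Subgroup G) : Set G)) = {1} := by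
  have h := fun n : ℕ => hsrr (Metric.ball x (1 / (n + 1)))
    Metric.isOpen_ball (Metric.mem_ball_self (by positivity))
  choose W hWclopen hxW hWV Γ' hnorm hfin hret using h
  refine ⟨fun n => ⨅ k : Fin (n + 1), Γ' k, ?_, ?_, ?_⟩
  · intro n
    refine le_iInf fun k => ?_
    simpa using iInf_le (fun k : Fin (n + 2) => Γ' ↑k) k.castSucc
  · intro n
    exact Subgroup.finiteIndex_iInf fun k => hfin _
  · ext g
    simp only [Set.mem_iInter, Set.mem_singleton_iff, SetLike.mem_coe, Subgroup.mem_iInf]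
    constructor
    · intro hg
      have hball : ∀ n : ℕ, g • x ∈ Metric.ball x (1 / (n + 1)) := by
        intro n
        refine hWV n ?_
        have h1 : g ∈ Γ' n := by simpa using hg n (Fin.last n)
        have h2 : g ∈ ReturnTimes G x (W n) := by rw [hret n]; exact h1
        exact h2
      have hdist : dist (g • x) x = 0 := by
        by_contra hne
        have hpos : 0 < dist (g • x) x := lt_of_le_of_ne dist_nonneg (Ne.symm hne)
        obtain ⟨n, hn⟩ := exists_nat_one_div_lt hpos
        have := hball n
        rw [Metric.mem_ball] at this
        linarith
      exact hfree g x (dist_eq_zero.mp hdist)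
    · rintro rfl n k
      exact Subgroup.one_mem _

theorem srr_reverse {G : Type*} [Group G] (Γ : ℕ → Subgroup G)
    (hdec : ∀ n, Γ (n + 1) ≤ Γ n) (hfi : ∀ n, (Γ n).FiniteIndex)
    (hint : (⋂ n, ((Γ n : Subgroup G) : Set G)) = {1}) :
    ∃ (X : Type) (_ : MetricSpace X) (_ : MulAction G X),
      CompactSpace X ∧
      (∀ g : G, Continuous fun x : X => g • x) ∧
      (∀ (g : G) (x : X), g • x = x → g = 1) ∧
      ∃ x : X, StronglyRegularlyRecurrent G x ∧ Dense (Set.range fun g : G => g • x) := by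
  classical
  set N : ℕ → Subgroup G := fun n => (Γ n).normalCore with hN
  haveI hNn : ∀ n, (N n).Normal := fun n => Subgroup.normalCore_normal _
  have hNfi : ∀ n, (N n).FiniteIndex := fun n => by
    haveI := hfi n; exact inferInstanceAs ((Γ n).normalCore.FiniteIndex)
  have hNanti : ∀ {k n : ℕ}, k ≤ n → N n ≤ N k := by
    have hanti : Antitone Γ := antitone_nat_of_succ_le hdec
    intro k n hkn
    exact Subgroup.normal_le_normalCore.mpr ((Subgroup.normalCore_le _).trans (hanti hkn))
  haveI hNquot : ∀ n, Finite (G ⧸ N n) := fun n => by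
    haveI := hNfi n; exact Subgroup.finite_quotient_of_finiteIndex
  have hemb : ∀ n : ℕ, ∃ f : G ⧸ N n → ℕ, Function.Injective f := fun n => by
    haveI := hNquot n
    exact Countable.exists_injective_nat _
  choose ι hι using hemb
  let emb : ∀ n, (G ⧸ N n) ↪ ℕ := fun n => ⟨ι n, hι n⟩
  letI : MetricSpace (ℕ → ℕ) := PiCountable.metricSpace
  -- discreteness of ℕ in whatever topology gets inferred
  haveI hdisc : DiscreteTopology ℕ := by infer_instance
  let ρ : ∀ _ : ℕ, G →* Equiv.Perm ℕ := fun n =>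
    (Equiv.Perm.viaEmbeddingHom (emb n)).comp (MulAction.toPermHom G (G ⧸ N n))
  letI : SMul G (ℕ → ℕ) := ⟨fun g y n => ρ n g (y n)⟩
  have hsmul_def : ∀ (g : G) (y : ℕ → ℕ) (n : ℕ), (g • y) n = ρ n g (y n) := fun _ _ _ => rfl
  letI : MulAction G (ℕ → ℕ) :=
    { one_smul := fun y => funext fun n => by
        rw [hsmul_def, map_one]; rfl
      mul_smul := fun g h y => funext fun n => by
        rw [hsmul_def, map_mul]; rfl }
  let φ : G → (ℕ → ℕ) := fun g n => emb n (QuotientGroup.mk g)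
  have hφsmul : ∀ g h : G, g • φ h = φ (g * h) := by
    intro g h
    funext n
    rw [hsmul_def]
    show ((MulAction.toPermHom G (G ⧸ N n)) g).viaEmbedding (emb n)
      (emb n (QuotientGroup.mk h)) = emb n (QuotientGroup.mk (g * h))
    rw [Equiv.Perm.viaEmbedding_apply]
    exact congrArg (emb n) (MulAction.Quotient.smul_mk (N n) g h)
  have hcontP : ∀ g : G, Continuous fun y : ℕ → ℕ => g • y := by
    intro g
    refine continuous_pi fun n => ?_
    have heq : (fun y : ℕ → ℕ => (g • y) n) = (fun m => ρ n g m) ∘ fun y : ℕ → ℕ => y n := rfl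
    rw [heq]
    exact continuous_of_discreteTopology.comp (continuous_apply n)
  -- the ambient compact set
  have hrange_pi : Set.range φ ⊆ Set.pi Set.univ fun n => Set.range (emb n) := by
    rintro _ ⟨g, rfl⟩ n _
    exact ⟨QuotientGroup.mk g, rfl⟩
  have hpi_closed : IsClosed (Set.pi Set.univ fun n => Set.range (emb n)) :=
    isClosed_set_pi fun n _ => (Set.finite_range _).isClosed
  have hclosure_pi : closure (Set.range φ) ⊆ Set.pi Set.univ fun n => Set.range (emb n) :=
    closure_minimal hrange_pi hpi_closed
  have hpi_compact : IsCompact (Set.pi Set.univ fun n => Set.range (emb n)) :=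
    isCompact_univ_pi fun n => (Set.finite_range _).isCompact
  have hK : IsCompact (closure (Set.range φ)) :=
    IsCompact.of_isClosed_subset hpi_compact isClosed_closure hclosure_pi
  -- the space
  let X : Type := ↥(closure (Set.range φ))
  have hinv : ∀ g : G, ∀ y ∈ closure (Set.range φ), g • y ∈ closure (Set.range φ) := by
    intro g y hy
    have h1 : (fun y : ℕ → ℕ => g • y) '' closure (Set.range φ) ⊆
        closure ((fun y : ℕ → ℕ => g • y) '' Set.range φ) :=
      image_closure_subset_closure_image (hcontP g)
    have h2 : (fun y : ℕ → ℕ => g • y) '' Set.range φ ⊆ Set.range φ := by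
      rintro _ ⟨_, ⟨h, rfl⟩, rfl⟩
      exact ⟨g * h, (hφsmul g h).symm⟩
    exact closure_mono h2 (h1 ⟨y, hy, rfl⟩)
  letI : MulAction G X :=
    { smul := fun g y => ⟨g • y.1, hinv g y.1 y.2⟩
      one_smul := fun y => Subtype.ext (one_smul G y.1)
      mul_smul := fun g h y => Subtype.ext (mul_smul g h y.1) }
  have hXsmul_def : ∀ (g : G) (y : X), (g • y).1 = g • y.1 := fun _ _ => rfl
  haveI : CompactSpace X := isCompact_iff_compactSpace.mp hK
  refine ⟨X, inferInstance, inferInstance, inferInstance, ?_, ?_, ?_⟩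
  · -- continuity
    intro g
    exact Continuous.subtype_mk ((hcontP g).comp continuous_subtype_val) _
  · -- freeness
    intro g y hgy
    have hy : ∀ n : ℕ, ∃ c : G ⧸ N n, emb n c = y.1 n := by
      intro n
      exact hclosure_pi y.2 n (Set.mem_univ n)
    have hgN : ∀ n, g ∈ N n := by
      intro n
      obtain ⟨c, hc⟩ := hy n
      have h1 : ρ n g (y.1 n) = y.1 n := by
        have := congrArg (fun z : X => z.1 n) hgy
        simpa [hXsmul_def, hsmul_def] using this
      rw [← hc] at h1
      have h2 : emb n ((MulAction.toPermHom G (G ⧸ N n)) g c) = emb n c := by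
        rw [← Equiv.Perm.viaEmbedding_apply]; exact h1
      have h3 : g • c = c := (emb n).injective h2
      obtain ⟨a, rfl⟩ := QuotientGroup.mk_surjective c
      rw [MulAction.Quotient.smul_mk, smul_eq_mul] at h3
      have h4 : a⁻¹ * (g * a) ∈ N n := by
        rw [← QuotientGroup.eq]
        exact h3.symm
      have h5 := (hNn n).conj_mem _ h4 a
      simpa [mul_assoc] using h5
    have : g ∈ ⋂ n, ((Γ n : Subgroup G) : Set G) := by
      refine Set.mem_iInter.mpr fun n => ?_
      exact Subgroup.normalCore_le _ (hgN n)
    rw [hint] at this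
    exact this
  · -- the srr point with dense orbit
    have hx0mem : φ 1 ∈ closure (Set.range φ) := subset_closure ⟨1, rfl⟩
    refine ⟨⟨φ 1, hx0mem⟩, ?_, ?_⟩
    · -- strongly regularly recurrent
      intro V hV hx0V
      obtain ⟨U, hU, hUV⟩ := isOpen_induced_iff.mp hV
      have hx0U : φ 1 ∈ U := by rw [← hUV] at hx0V; exact hx0V
      obtain ⟨I, u, hu, hIU⟩ := isOpen_pi_iff.mp hU _ hx0U
      set n := I.sup id with hn
      -- coherence on the closure
      have hcoh : ∀ y ∈ closure (Set.range φ), ∀ k ≤ n, y n = φ 1 n → y k = φ 1 k := by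
        intro y hy k hk
        have hDclosed : IsClosed {y : ℕ → ℕ | y n = φ 1 n → y k = φ 1 k} := by
          have : {y : ℕ → ℕ | y n = φ 1 n → y k = φ 1 k} =
              ((fun y : ℕ → ℕ => y n) ⁻¹' {φ 1 n})ᶜ ∪ ((fun y : ℕ → ℕ => y k) ⁻¹' {φ 1 k}) := by
            ext y; simp [imp_iff_not_or]
          rw [this]
          exact IsClosed.union
            (((isClopen_discrete _).preimage (continuous_apply n)).compl.isClosed)
            ((isClopen_discrete _).preimage (continuous_apply k)).isClosed
        have hDrange : Set.range φ ⊆ {y : ℕ → ℕ | y n = φ 1 n → y k = φ 1 k} := by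
          rintro _ ⟨g, rfl⟩ hgn
          have h1 : (QuotientGroup.mk g : G ⧸ N n) = QuotientGroup.mk 1 := (emb n).injective hgn
          have h2 : g ∈ N n := by
            rwa [QuotientGroup.mk_one, QuotientGroup.eq_one_iff] at h1
          have h3 : g ∈ N k := hNanti hk h2
          show emb k (QuotientGroup.mk g) = emb k (QuotientGroup.mk 1)
          congr 1
          rw [QuotientGroup.mk_one, QuotientGroup.eq_one_iff]
          exact h3
        exact closure_minimal hDrange hDclosed hy
      refine ⟨{x : X | x.1 n = φ 1 n}, ?_, rfl, ?_, N n, hNn n, hNfi n, ?_⟩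
      · exact IsClopen.preimage (isClopen_discrete ({φ 1 n} : Set ℕ))
          ((continuous_apply n).comp continuous_subtype_val)
      · -- W ⊆ V
        intro x hx
        have hxU : x.1 ∈ U := by
          refine hIU ?_
          intro i hi
          have hkn : i ≤ n := Finset.le_sup (f := id) hi
          have : x.1 i = φ 1 i := hcoh x.1 x.2 i hkn hx
          rw [this]
          exact (hu i hi).2
        rw [← hUV]
        exact hxU
      · -- return times
        ext g
        simp only [SetLike.mem_coe]
        constructor
        · intro hg
          have h1 : φ g n = φ 1 n := by
            have : (g • (⟨φ 1, hx0mem⟩ : X)).1 = φ g := by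
              rw [hXsmul_def]; rw [hφsmul, mul_one]
            have h2 : (g • (⟨φ 1, hx0mem⟩ : X)).1 n = φ 1 n := hg
            rwa [this] at h2
          have h3 : (QuotientGroup.mk g : G ⧸ N n) = QuotientGroup.mk 1 :=
            (emb n).injective h1
          rwa [QuotientGroup.mk_one, QuotientGroup.eq_one_iff] at h3
        · intro hg
          show (g • (⟨φ 1, hx0mem⟩ : X)).1 n = φ 1 n
          rw [hXsmul_def, hφsmul, mul_one]
          show emb n (QuotientGroup.mk g) = emb n (QuotientGroup.mk 1)
          congr 1
          rw [QuotientGroup.mk_one, QuotientGroup.eq_one_iff]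
          exact hg
    · -- dense orbit
      rw [dense_iff_closure_eq]
      refine Set.eq_univ_of_forall fun x => ?_
      have hval : Subtype.val '' Set.range (fun g : G => g • (⟨φ 1, hx0mem⟩ : X)) =
          Set.range φ := by
        ext y
        constructor
        · rintro ⟨_, ⟨g, rfl⟩, rfl⟩
          refine ⟨g, ?_⟩
          rw [hXsmul_def, hφsmul, mul_one]
        · rintro ⟨g, rfl⟩
          refine ⟨g • (⟨φ 1, hx0mem⟩ : X), ⟨g, rfl⟩, ?_⟩
          rw [hXsmul_def, hφsmul, mul_one]
      rw [Topology.IsInducing.subtypeVal.closure_eq_preimage_closure_image]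
      rw [hval]
      exact x.2

/-- a finitely generated discrete group `G` admits a free strongly
regularly recurrent action on a compact metric space iff `G` is residually finite. -/
theorem statement10 {G : Type*} [Group G] [Group.FG G] :
    (∃ (X : Type) (_ : MetricSpace X) (_ : MulAction G X),
      CompactSpace X ∧
      (∀ g : G, Continuous fun x : X => g • x) ∧
      (∀ (g : G) (x : X), g • x = x → g = 1) ∧
      ∃ x : X, StronglyRegularlyRecurrent G x ∧ Dense (Set.range fun g : G => g • x))
    ↔ ∃ Γ : ℕ → Subgroup G,
        (∀ n, Γ (n + 1) ≤ Γ n) ∧ (∀ n, (Γ n).FiniteIndex) ∧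
        (⋂ n, ((Γ n : Subgroup G) : Set G)) = {1} := by
  constructor
  · rintro ⟨X, _, _, _, _, hfree, x, hsrr, -⟩
    exact srr_forward hfree hsrr
  · rintro ⟨Γ, hdec, hfi, hint⟩
    exact srr_reverse Γ hdec hfi hint
end

section
/- Let G be a discrete finitely generated group, let (X, G) be a minimal topological dynamical system, and let π : X → ←G be an almost 1-1 factor map onto a subodometer ←G = lim_{←n}(G/Γ_n, π_n) (so that ←G is the maximal equicontinuous factor of X). Then a group homomorphism χ : G → S¹ admits a nonzero continuous eigenfunction on X — i.e., a continuous f : X → ℂ, f not identically 0, with f(g·x) = χ(g) f(x) for all x ∈ X and g ∈ G — if and only if there exists n ≥ 0 such that χ(γ) = 1 for all γ ∈ Γ_n. -/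
open Pointwise MeasureTheory

/-- A factor map between two `G`-systems: a continuous surjection commuting with the
`G`-actions. -/
def IsFactorMap (G : Type*) {X Y : Type*} [Group G] [TopologicalSpace X] [TopologicalSpace Y]
    [MulAction G X] [MulAction G Y] (π : X → Y) : Prop :=
  Continuous π ∧ Function.Surjective π ∧ ∀ (g : G) (x : X), π (g • x) = g • π x


section Aux

lemma abs_exp_sub_one_sq (x : ℝ) :
    ‖Complex.exp (x * Complex.I) - 1‖ ^ 2 = 2 - 2 * Real.cos x := by
  rw [Complex.exp_mul_I, Complex.sq_norm, Complex.normSq_apply]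
  simp [Complex.cos_ofReal_re, Complex.sin_ofReal_re, Complex.add_re, Complex.add_im,
    Complex.mul_re, Complex.mul_im, Complex.I_re, Complex.I_im, Complex.sub_re, Complex.sub_im]
  nlinarith [Real.sin_sq_add_cos_sq x]

lemma exists_cos_le (θ : ℝ) (h0 : 0 < θ) (h1 : θ ≤ Real.pi) :
    ∃ k : ℕ, Real.cos (k * θ) ≤ 1 / 2 := by
  have hπ := Real.pi_pos
  rcases le_or_gt (Real.pi / 3) θ with h | h
  · refine ⟨1, ?_⟩
    rw [Nat.cast_one, one_mul, ← Real.cos_pi_div_three]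
    exact Real.cos_le_cos_of_nonneg_of_le_pi (by positivity) h1 h
  · refine ⟨⌈(Real.pi / 3) / θ⌉₊, ?_⟩
    have hd : 0 ≤ (Real.pi / 3) / θ := by positivity
    have hk1 : Real.pi / 3 ≤ ⌈(Real.pi / 3) / θ⌉₊ * θ := by
      have := Nat.le_ceil ((Real.pi / 3) / θ)
      calc Real.pi / 3 = (Real.pi / 3) / θ * θ := by field_simp
        _ ≤ ⌈(Real.pi / 3) / θ⌉₊ * θ := by nlinarith
    have hk2 : (⌈(Real.pi / 3) / θ⌉₊ : ℝ) * θ ≤ Real.pi := by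
      have := Nat.ceil_lt_add_one hd
      have : (⌈(Real.pi / 3) / θ⌉₊ : ℝ) * θ < ((Real.pi / 3) / θ + 1) * θ := by nlinarith
      have h2 : ((Real.pi / 3) / θ + 1) * θ = Real.pi / 3 + θ := by field_simp
      nlinarith
    rw [← Real.cos_pi_div_three]
    exact Real.cos_le_cos_of_nonneg_of_le_pi (by positivity) hk2 hk1

lemma circle_eq_one_of_pows_close (z : ℂ) (hz : ‖z‖ = 1)
    (h : ∀ k : ℕ, ‖z ^ k - 1‖ < 1) : z = 1 := by
  have hrep : z = Complex.exp (z.arg * Complex.I) := by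
    conv_lhs => rw [← Complex.norm_mul_exp_arg_mul_I z]
    rw [hz, Complex.ofReal_one, one_mul]
  by_contra hne
  have harg : z.arg ≠ 0 := by
    intro h0
    apply hne
    rw [hrep, h0]
    simp
  have h1 : |z.arg| ≤ Real.pi := Complex.abs_arg_le_pi z
  have h0 : 0 < |z.arg| := abs_pos.mpr harg
  obtain ⟨k, hk⟩ := exists_cos_le |z.arg| h0 h1
  have hcos : Real.cos (k * z.arg) ≤ 1 / 2 := by
    rcases abs_choice z.arg with hh | hh
    · rwa [hh] at hk
    · rw [hh] at hk
      rwa [mul_neg, Real.cos_neg] at hk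
  have hzk : z ^ k = Complex.exp ((k * z.arg : ℝ) * Complex.I) := by
    conv_lhs => rw [hrep]
    rw [← Complex.exp_nat_mul]
    congr 1
    push_cast
    ring
  have := h k
  have hsq : ‖z ^ k - 1‖ ^ 2 = 2 - 2 * Real.cos (k * z.arg) := by
    rw [hzk, abs_exp_sub_one_sq]
  nlinarith [norm_nonneg (z ^ k - 1)]

lemma quot_discrete {G : Type*} [Group G] [TopologicalSpace G] [DiscreteTopology G]
    (H : Subgroup G) : DiscreteTopology (G ⧸ H) := by
  have : ContinuousMul G := ⟨continuous_of_discreteTopology⟩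
  exact QuotientGroup.discreteTopology (N := H) (isOpen_discrete _)

lemma gamma_antitone {G : Type*} [Group G] (Γ : ℕ → Subgroup G)
    (hdec : ∀ n, Γ (n + 1) ≤ Γ n) : ∀ {m n : ℕ}, m ≤ n → Γ n ≤ Γ m := by
  intro m n h
  induction n with
  | zero => simp_all
  | succ k ih =>
    rcases Nat.lt_or_ge m (k+1) with h' | h'
    · exact le_trans (hdec k) (ih (Nat.lt_succ_iff.mp h'))
    · have : m = k + 1 := le_antisymm h h'
      subst this; exact le_rfl

lemma compat_descend {G : Type*} [Group G] (Γ : ℕ → Subgroup G) (x : ∀ i, G ⧸ Γ i)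
    (hx : Compat Γ x) (g : G) :
    ∀ {m n : ℕ}, m ≤ n → (QuotientGroup.mk g : G ⧸ Γ n) = x n →
      (QuotientGroup.mk g : G ⧸ Γ m) = x m := by
  intro m n h
  induction n with
  | zero =>
    intro hg
    obtain rfl : m = 0 := Nat.le_zero.mp h
    exact hg
  | succ k ih =>
    intro hg
    rcases Nat.lt_or_ge m (k+1) with h' | h'
    · exact ih (Nat.lt_succ_iff.mp h') (hx k g hg)
    · obtain rfl : m = k + 1 := le_antisymm h h'
      exact hg

lemma circle_coe_pow (z : Circle) (k : ℕ) : ((z ^ k : Circle) : ℂ) = (z : ℂ) ^ k := by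
  induction k with
  | zero => simp
  | succ n ih => rw [pow_succ, pow_succ, Circle.coe_mul, ih]

end Aux

/-- Corollary on continuous eigenvalues: if the minimal system
`(X, G)` is an almost 1-1 extension of the subodometer `lim_{←n} G/Γₙ`, then a character
`χ : G → S¹` admits a nonzero continuous eigenfunction on `X` iff `χ ≡ 1` on some
`Γₙ`. -/
theorem statement11 {G X : Type*} [Group G] [Group.FG G] [TopologicalSpace G]
    [DiscreteTopology G] [MetricSpace X] [CompactSpace X] [MulAction G X]
    (hc : ∀ g : G, Continuous fun x : X => g • x)
    (hmin : ∀ x : X, Dense (Set.range fun g : G => g • x))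
    (Γ : ℕ → Subgroup G) (hdec : ∀ n, Γ (n + 1) ≤ Γ n) (hfin : ∀ n, (Γ n).FiniteIndex)
    (π : X → Subodometer Γ) (hπ : IsFactorMap G π)
    (h11 : ∃ y : Subodometer Γ, ∃! z : X, π z = y)
    (χ : G →* Circle) :
    (∃ f : X → ℂ, Continuous f ∧ (∃ x, f x ≠ 0) ∧
        ∀ (g : G) (x : X), f (g • x) = (χ g : ℂ) * f x)
      ↔ ∃ n : ℕ, ∀ γ ∈ Γ n, χ γ = 1 := by
  constructor
  · -- forward direction
    rintro ⟨f, hf, ⟨x₀, hx₀⟩, heig⟩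
    obtain ⟨y, z, hπz, huniq⟩ := h11
    -- |f| is constant
    have habs : ∀ x : X, ‖f x‖ = ‖f x₀‖ := by
      have hco : Continuous fun x : X => ‖f x‖ := continuous_norm.comp hf
      have heqn : (fun x : X => ‖f x‖) = fun _ => ‖f x₀‖ := by
        apply Continuous.ext_on (hmin x₀) hco continuous_const
        rintro x ⟨g, rfl⟩
        simp only [heig, norm_mul, Circle.norm_coe, one_mul]
      exact fun x => congrFun heqn x
    set c := ‖f x₀‖ with hcdef
    have hc : 0 < c := by
      simpa [hcdef, norm_pos_iff] using hx₀
    have hfz : ‖f z‖ = c := habs z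
    obtain ⟨ε, hε, hball⟩ := Metric.continuousAt_iff.mp hf.continuousAt c hc
    haveI : ∀ i : ℕ, DiscreteTopology (G ⧸ Γ i) := fun i => quot_discrete (Γ i)
    set V : ℕ → Set X :=
      fun n => π ⁻¹' {w : Subodometer Γ | ∀ i ≤ n, w.1 i = y.1 i} with hVdef
    have hVclosed : ∀ n, IsClosed (V n) := by
      intro n
      apply IsClosed.preimage hπ.1
      have hset : {w : Subodometer Γ | ∀ i ≤ n, w.1 i = y.1 i}
          = ⋂ i ∈ Set.Iic n, (fun w : Subodometer Γ => w.1 i) ⁻¹' {y.1 i} := by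
        ext w; simp [Set.mem_iInter]
      rw [hset]
      exact isClosed_biInter fun i _ =>
        isClosed_singleton.preimage ((continuous_apply i).comp continuous_subtype_val)
    have hVdir : Directed (· ⊇ ·) V := by
      intro a b
      exact ⟨max a b,
        fun x hx i hi => hx i (le_trans hi (le_max_left a b)),
        fun x hx i hi => hx i (le_trans hi (le_max_right a b))⟩
    have hVnhds : ∀ x ∈ ⋂ n, V n, Metric.ball z ε ∈ nhds x := by
      intro x hx
      have hxy : π x = y :=
        Subtype.ext (funext fun i => (Set.mem_iInter.mp hx i) i le_rfl)
      rw [huniq x hxy]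
      exact Metric.ball_mem_nhds z hε
    obtain ⟨n, hVsub⟩ := exists_subset_nhds_of_compactSpace hVdir hVclosed hVnhds
    refine ⟨n, fun δ hδ => ?_⟩
    obtain ⟨gn, hgn⟩ := QuotientGroup.mk_surjective (y.1 n)
    have key : ∀ δ' ∈ Γ n, ‖(χ δ' : ℂ) - 1‖ < 1 := by
      intro δ' hδ'
      set γ := gn * δ' * gn⁻¹ with hγdef
      have hmem : γ • z ∈ V n := by
        show π (γ • z) ∈ {w : Subodometer Γ | ∀ i ≤ n, w.1 i = y.1 i}
        rw [hπ.2.2 γ z, hπz]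
        intro i hi
        have hgi : (QuotientGroup.mk gn : G ⧸ Γ i) = y.1 i :=
          compat_descend Γ y.1 y.2 gn hi hgn
        show γ • y.1 i = y.1 i
        rw [← hgi]
        show (QuotientGroup.mk (γ * gn) : G ⧸ Γ i) = QuotientGroup.mk gn
        rw [QuotientGroup.eq]
        have hcalc : (γ * gn)⁻¹ * gn = δ'⁻¹ := by
          rw [hγdef]; group
        rw [hcalc]
        exact inv_mem (gamma_antitone Γ hdec hi hδ')
      have hd : dist (γ • z) z < ε := Metric.mem_ball.mp (hVsub hmem)
      have hball' := hball hd
      rw [heig γ z] at hball'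
      have hχγ : χ γ = χ δ' := by
        rw [hγdef]
        simp [map_mul, mul_comm, mul_assoc]
      rw [hχγ] at hball'
      rw [Complex.dist_eq] at hball'
      have hfactor : (χ δ' : ℂ) * f z - f z = ((χ δ' : ℂ) - 1) * f z := by ring
      rw [hfactor, norm_mul, hfz] at hball'
      exact (mul_lt_iff_lt_one_left hc).mp hball'
    have hpow : ∀ k : ℕ, ‖((χ δ : ℂ)) ^ k - 1‖ < 1 := by
      intro k
      have h1 : ((χ δ : ℂ)) ^ k = ((χ (δ ^ k) : ℂ)) := by
        rw [map_pow, circle_coe_pow]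
      rw [h1]
      exact key (δ ^ k) (pow_mem hδ k)
    have := circle_eq_one_of_pows_close (χ δ : ℂ) (Circle.norm_coe _) hpow
    exact Circle.ext (by simpa using this)
  · -- backward direction
    rintro ⟨n, hn⟩
    haveI : DiscreteTopology (G ⧸ Γ n) := quot_discrete (Γ n)
    have hwd : ∀ a b : G, (QuotientGroup.leftRel (Γ n)) a b → ((χ a : ℂ)) = ((χ b : ℂ)) := by
      intro a b hab
      have hmem : a⁻¹ * b ∈ Γ n := QuotientGroup.leftRel_apply.mp hab
      have h1 : χ (a⁻¹ * b) = 1 := hn _ hmem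
      have : χ b = χ a * χ (a⁻¹ * b) := by
        rw [← map_mul]
        congr 1
        group
      rw [this, h1, mul_one]
    set F : G ⧸ Γ n → ℂ := fun q => Quotient.liftOn' q (fun g => (χ g : ℂ)) hwd with hFdef
    have hFmk : ∀ g : G, F (QuotientGroup.mk g) = (χ g : ℂ) := fun g => rfl
    refine ⟨fun x => F ((π x).1 n), ?_, ?_, ?_⟩
    · exact continuous_of_discreteTopology.comp
        (((continuous_apply n).comp continuous_subtype_val).comp hπ.1)
    · obtain ⟨-, x₀, -, -⟩ := h11
      refine ⟨x₀, ?_⟩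
      show F ((π x₀).1 n) ≠ 0
      obtain ⟨g, hg⟩ := QuotientGroup.mk_surjective ((π x₀).1 n)
      rw [← hg, hFmk]
      exact Circle.coe_ne_zero _
    · intro g x
      show F ((π (g • x)).1 n) = (χ g : ℂ) * F ((π x).1 n)
      obtain ⟨h, hh⟩ := QuotientGroup.mk_surjective ((π x).1 n)
      have h1 : (π (g • x)).1 n = QuotientGroup.mk (g * h) := by
        rw [hπ.2.2 g x]
        show g • (π x).1 n = _
        rw [← hh]
        rfl
      rw [h1, hFmk, ← hh, hFmk, map_mul, Circle.coe_mul]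
end

section
/- Let G be a discrete finitely generated residually finite group, let (Γ_i)_{i≥0} be a decreasing sequence of finite-index subgroups of G with ⋂_{i≥0} Γ_i = {e}, let ←G = lim_{←i}(G/Γ_i, π_i) be the associated subodometer, and let τ : G → ←G, τ(g) = (gΓ_i)_{i≥0}, be the canonical injection. Endow G with the topology pulled back from ←G along τ, and let K be a compact metric space. If f : G → K is a semicocycle on ←G, i.e., continuous for this topology, then f, regarded as an element of the space K^G with the product topology and the shift action (γ·f)(g) = f(gγ), is a regularly recurrent point of (K^G, G). -/
open Pointwise MeasureTheory

/-- The (left) shift action of `G` on `K^G`: `(γ • x) g = x (g γ)`. -/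
instance shiftMulAction (G K : Type*) [Group G] : MulAction G (G → K) where
  smul γ x := fun g => x (g * γ)
  one_smul x := funext fun g => congrArg x (mul_one g)
  mul_smul γ δ x := funext fun g => (congrArg x (mul_assoc g γ δ)).symm

/-- Theorem `semicociclo1`: a semicocycle `f : G → K` on a subodometer
(with trivial intersection of the `Γᵢ`) is a regularly recurrent point of the shift
system `(K^G, G)`. -/
theorem statement12 {G : Type*} [Group G] [Group.FG G] [TopologicalSpace G]
    [DiscreteTopology G]
    (Γ : ℕ → Subgroup G) (hdec : ∀ i, Γ (i + 1) ≤ Γ i) (hfin : ∀ i, (Γ i).FiniteIndex)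
    (htriv : (⋂ i, ((Γ i : Subgroup G) : Set G)) = {1})
    {K : Type*} [MetricSpace K] [CompactSpace K]
    (f : G → K)
    (hf : @Continuous G K
      (TopologicalSpace.induced (odoTau Γ hdec) inferInstance) inferInstance f) :
    RegularlyRecurrent G (f : G → K) := by
  have hanti : Antitone Γ := antitone_nat_of_succ_le hdec
  -- Key: continuity of f gives, for each g and open U ∋ f g, a level n such that
  -- agreement modulo Γ n forces f-values in U.
  have key : ∀ (g : G) (U : Set K), IsOpen U → f g ∈ U →
      ∃ n : ℕ, ∀ h : G, (QuotientGroup.mk h : G ⧸ Γ n) = QuotientGroup.mk g → f h ∈ U := by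
    intro g U hU hgU
    have hopen : @IsOpen G (TopologicalSpace.induced (odoTau Γ hdec) inferInstance)
        (f ⁻¹' U) :=
      (@continuous_def G K (TopologicalSpace.induced (odoTau Γ hdec) inferInstance) _ f).mp
        hf U hU
    obtain ⟨S, hS, hSeq⟩ := isOpen_induced_iff.mp hopen
    obtain ⟨T, hT, hTeq⟩ := isOpen_induced_iff.mp hS
    have hgT : (odoTau Γ hdec g).1 ∈ T := by
      have : odoTau Γ hdec g ∈ S := by
        have : g ∈ (odoTau Γ hdec) ⁻¹' S := hSeq ▸ hgU
        exact this
      rw [← hTeq] at this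
      exact this
    obtain ⟨I, u, hu, hsub⟩ := isOpen_pi_iff.mp hT _ hgT
    refine ⟨I.sup id, fun h hh => ?_⟩
    have hmem : h ∈ (odoTau Γ hdec) ⁻¹' S := by
      rw [← hTeq]
      apply hsub
      intro i hi
      have hi' : i ≤ I.sup id := Finset.le_sup (f := id) hi
      have : (QuotientGroup.mk h : G ⧸ Γ i) = QuotientGroup.mk g := by
        rw [QuotientGroup.eq] at hh ⊢
        exact hanti hi' hh
      show (odoTau Γ hdec h).1 i ∈ u i
      have he : (odoTau Γ hdec h).1 i = (odoTau Γ hdec g).1 i := this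
      rw [he]
      exact (hu i hi).2
    rw [hSeq] at hmem
    exact hmem
  intro V hV hfV
  obtain ⟨I, u, hu, hsub⟩ := isOpen_pi_iff.mp hV f hfV
  have key' : ∀ g : G, ∃ n : ℕ, g ∈ I →
      ∀ h : G, (QuotientGroup.mk h : G ⧸ Γ n) = QuotientGroup.mk g → f h ∈ u g := by
    intro g
    by_cases hg : g ∈ I
    · obtain ⟨n, hn⟩ := key g (u g) (hu g hg).1 (hu g hg).2
      exact ⟨n, fun _ => hn⟩
    · exact ⟨0, fun hg' => absurd hg' hg⟩
  choose n hn using key'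
  refine ⟨Γ (I.sup n), hfin _, fun γ hγ => ?_⟩
  show γ • f ∈ V
  apply hsub
  intro g hg
  show f (g * γ) ∈ u g
  apply hn g hg
  rw [QuotientGroup.eq]
  have : γ ∈ Γ (n g) := hanti (Finset.le_sup hg) hγ
  simpa using this
end

section
/- Let G be a discrete finitely generated group, let (X, G) be a minimal topological dynamical system, and let ←G = lim_{←n}(G/Γ_n, π_n) be a subodometer with ⋂_{n≥0} Γ_n = {e}, with e ∈ ←G the sequence of identity cosets. Then there exists an almost 1-1 factor map π : X → ←G with |π^{-1}({e})| = 1 if and only if (X, G) is conjugate to (Ω_G(f), G), where f : G → K is a semicocycle on ←G with values in some compact metric space K that is invariant under no rotation, Ω_G(f) being the closure of the shift-orbit of f in K^G. -/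
open Pointwise MeasureTheory

set_option linter.unusedSectionVars false

set_option maxHeartbeats 1000000
set_option synthInstance.maxHeartbeats 400000


open Filter Topology Set

section Bases
variable {ι : Type*}

lemma pi_discrete_nhds_basis {π : ι → Type*} [∀ i, TopologicalSpace (π i)]
    [∀ i, DiscreteTopology (π i)] (x : ∀ i, π i) :
    (𝓝 x).HasBasis (fun _ : Finset ι => True)
      (fun I => {y | ∀ i ∈ I, y i = x i}) := by
  constructor
  intro t
  constructor
  · intro ht
    obtain ⟨u, hut, huo, hxu⟩ := mem_nhds_iff.mp ht
    obtain ⟨I, v, hv, hsub⟩ := isOpen_pi_iff.mp huo x hxu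
    refine ⟨I, trivial, fun y hy => hut (hsub ?_)⟩
    intro i hi
    rw [hy i hi]
    exact (hv i hi).2
  · rintro ⟨I, -, hsub⟩
    refine mem_of_superset ?_ hsub
    have : {y : ∀ i, π i | ∀ i ∈ I, y i = x i} = (↑I : Set ι).pi (fun i => {x i}) := by
      ext y; simp [Set.mem_pi]
    rw [this]
    exact (isOpen_set_pi I.finite_toSet (fun i _ => isOpen_discrete _)).mem_nhds
      (by simp [Set.mem_pi])

lemma pi_metric_nhds_basis {K : Type*} [PseudoMetricSpace K] (x : ι → K) :
    (𝓝 x).HasBasis (fun p : Finset ι × ℝ => 0 < p.2)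
      (fun p => {y | ∀ i ∈ p.1, dist (y i) (x i) < p.2}) := by
  constructor
  intro t
  constructor
  · intro ht
    obtain ⟨u, hut, huo, hxu⟩ := mem_nhds_iff.mp ht
    obtain ⟨I, v, hv, hsub⟩ := isOpen_pi_iff.mp huo x hxu
    have hball : ∀ i ∈ I, ∃ ε > 0, Metric.ball (x i) ε ⊆ v i := fun i hi =>
      Metric.isOpen_iff.mp (hv i hi).1 (x i) (hv i hi).2
    choose! ε hε hba using hball
    rcases I.eq_empty_or_nonempty with hI | hI
    · refine ⟨⟨∅, 1⟩, one_pos, fun y hy => hut (hsub ?_)⟩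
      intro i hi; simp [hI] at hi
    · refine ⟨⟨I, I.inf' hI ε⟩, ?_, fun y hy => hut (hsub ?_)⟩
      · exact (Finset.lt_inf'_iff hI).mpr (fun i hi => hε i hi)
      · intro i hi
        exact hba i hi (lt_of_lt_of_le (hy i hi) (Finset.inf'_le ε hi))
  · rintro ⟨⟨I, ε⟩, hε, hsub⟩
    refine mem_of_superset ?_ hsub
    have : IsOpen {y : ι → K | ∀ i ∈ I, dist (y i) (x i) < ε} := by
      have : {y : ι → K | ∀ i ∈ I, dist (y i) (x i) < ε} =
          ⋂ i ∈ I, (fun y : ι → K => y i) ⁻¹' Metric.ball (x i) ε := by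
        ext y; simp [Metric.mem_ball]
      rw [this]
      exact isOpen_biInter_finset fun i _ => Metric.isOpen_ball.preimage (continuous_apply i)
    exact this.mem_nhds (by simp [hε])

end Bases

section OdoAux
variable {G : Type*} [Group G] [TopologicalSpace G] [DiscreteTopology G]
variable {Γ : ℕ → Subgroup G}

lemma qdisc (i : ℕ) : DiscreteTopology (G ⧸ Γ i) := by
  constructor
  rw [DiscreteTopology.eq_bot (α := G)]
  rfl

lemma qmk_smul (g h : G) (i : ℕ) :
    g • (QuotientGroup.mk h : G ⧸ Γ i) = QuotientGroup.mk (g * h) := rfl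

lemma subod_smul_coe (g : G) (h : Subodometer Γ) (i : ℕ) :
    (g • h).1 i = g • h.1 i := rfl

lemma odoTau_coe (hdec : ∀ i, Γ (i+1) ≤ Γ i) (a : G) (i : ℕ) :
    (odoTau Γ hdec a).1 i = QuotientGroup.mk a := rfl

lemma odoE_coe (hdec : ∀ i, Γ (i+1) ≤ Γ i) (i : ℕ) :
    (odoE Γ hdec).1 i = QuotientGroup.mk (1 : G) := rfl

lemma smul_odoE (hdec : ∀ i, Γ (i+1) ≤ Γ i) (g : G) :
    g • odoE Γ hdec = odoTau Γ hdec g :=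
  Subtype.ext (funext fun i => by
    show g • (QuotientGroup.mk 1 : G ⧸ Γ i) = QuotientGroup.mk g
    rw [qmk_smul, mul_one])

lemma agree_down {x y : ∀ i, G ⧸ Γ i} (hx : Compat Γ x) (hy : Compat Γ y) :
    ∀ n, x n = y n → ∀ i, i ≤ n → x i = y i := by
  have step : ∀ m, x (m+1) = y (m+1) → x m = y m := by
    intro m hm
    obtain ⟨g, hg⟩ := QuotientGroup.mk_surjective (x (m+1))
    have h1 := hx m g hg
    have h2 := hy m g (by rw [hm] at hg; exact hg)
    rw [← h1, ← h2]
  intro n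
  induction n with
  | zero =>
    intro h i hi
    have : i = 0 := Nat.le_zero.mp hi
    subst this; exact h
  | succ m ih =>
    intro h i hi
    rcases Nat.lt_or_ge i (m+1) with hlt | hge
    · exact ih (step m h) i (Nat.lt_succ_iff.mp hlt)
    · have : i = m + 1 := Nat.le_antisymm hi hge
      subst this; exact h

lemma subod_nhds_basis (h : Subodometer Γ) :
    (𝓝 h).HasBasis (fun _ : ℕ => True)
      (fun n => {y : Subodometer Γ | ∀ i ≤ n, y.1 i = h.1 i}) := by
  haveI : ∀ i, DiscreteTopology (G ⧸ Γ i) := fun i => qdisc i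
  constructor
  intro t
  rw [show (𝓝 h : Filter (Subodometer Γ)) = comap Subtype.val (𝓝 h.1) from nhds_subtype_eq_comap ..]
  refine (((pi_discrete_nhds_basis h.1).comap Subtype.val).mem_iff).trans ?_
  constructor
  · rintro ⟨I, -, hsub⟩
    refine ⟨I.sup id, trivial, fun y hy => hsub ?_⟩
    intro i hi
    exact hy i (Finset.le_sup (f := id) hi)
  · rintro ⟨n, -, hsub⟩
    refine ⟨Finset.range (n+1), trivial, fun y hy => hsub ?_⟩
    intro i hi
    exact hy i (Finset.mem_range.mpr (Nat.lt_succ_of_le hi))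

lemma compat_isClosed : IsClosed {x : ∀ i, G ⧸ Γ i | Compat Γ x} := by
  haveI : ∀ i, DiscreteTopology (G ⧸ Γ i) := fun i => qdisc i
  rw [← isOpen_compl_iff]
  rw [isOpen_iff_mem_nhds]
  intro x hx
  simp only [mem_compl_iff, mem_setOf_eq, Compat, not_forall] at hx
  obtain ⟨i, g, hg, hne⟩ := hx
  refine mem_of_superset (((pi_discrete_nhds_basis x).mem_iff).mpr
    ⟨{i, i+1}, trivial, le_refl _⟩) ?_
  intro y hy
  simp only [Finset.mem_insert, Finset.mem_singleton, mem_setOf_eq] at hy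
  intro hc
  have h1 : y i = x i := hy i (Or.inl rfl)
  have h2 : y (i+1) = x (i+1) := hy (i+1) (Or.inr rfl)
  exact hne (by rw [← h1]; exact hc i g (by rw [h2]; exact hg))

lemma subod_compact (hfin : ∀ n, (Γ n).FiniteIndex) : CompactSpace (Subodometer Γ) := by
  haveI : ∀ i, DiscreteTopology (G ⧸ Γ i) := fun i => qdisc i
  haveI : ∀ i, Finite (G ⧸ Γ i) := fun i => @Subgroup.finite_quotient_of_finiteIndex _ _ _ (hfin i)
  haveI : ∀ i, CompactSpace (G ⧸ Γ i) := fun i => Finite.compactSpace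
  have hc : IsCompact {x : ∀ i, G ⧸ Γ i | Compat Γ x} :=
    IsClosed.isCompact (compat_isClosed (Γ := Γ))
  show CompactSpace ↥{x : ∀ i, G ⧸ Γ i | Compat Γ x}
  exact isCompact_iff_compactSpace.mp hc

instance subod_t2 : T2Space (Subodometer Γ) := by
  haveI : ∀ i, DiscreteTopology (G ⧸ Γ i) := fun i => qdisc i
  show T2Space ↥{x : ∀ i, G ⧸ Γ i | Compat Γ x}
  infer_instance

lemma tau_dense (hdec : ∀ i, Γ (i+1) ≤ Γ i) (h : Subodometer Γ) :
    h ∈ closure (Set.range (odoTau Γ hdec)) := by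
  rw [mem_closure_iff_nhds_basis (subod_nhds_basis h)]
  intro n _
  obtain ⟨a, ha⟩ := QuotientGroup.mk_surjective (h.1 n)
  refine ⟨odoTau Γ hdec a, Set.mem_range_self a, ?_⟩
  intro i hi
  exact agree_down (odoTau Γ hdec a).2 h.2 n ha i hi

end OdoAux

section PermM
open Filter Topology Set
set_option linter.unusedSectionVars false

instance permTopInst (α : Type*) : TopologicalSpace (Equiv.Perm α) := ⊥
instance permDiscInst (α : Type*) : DiscreteTopology (Equiv.Perm α) := ⟨rfl⟩
instance permTopGroupInst (α : Type*) : IsTopologicalGroup (Equiv.Perm α) :=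
  { continuous_mul := continuous_of_discreteTopology
    continuous_inv := continuous_of_discreteTopology }

variable {G : Type*} [Group G] [TopologicalSpace G] [DiscreteTopology G]
variable (Γ : ℕ → Subgroup G)

/-- The homomorphism `σ` from `G` to the product of permutation groups of the coset
spaces. -/
def sigmaHom : G →* ∀ i, Equiv.Perm (G ⧸ Γ i) :=
  Pi.monoidHom (fun i => MulAction.toPermHom G (G ⧸ Γ i))

lemma sigmaHom_apply (a : G) (i : ℕ) (x : G ⧸ Γ i) : sigmaHom Γ a i x = a • x := rfl

/-- Raw coordinatewise action of a sequence of permutations. -/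
def mact (m : ∀ i, Equiv.Perm (G ⧸ Γ i)) (x : ∀ i, G ⧸ Γ i) : ∀ i, G ⧸ Γ i :=
  fun i => m i (x i)

lemma mact_mul (m n : ∀ i, Equiv.Perm (G ⧸ Γ i)) (x : ∀ i, G ⧸ Γ i) :
    mact Γ (m * n) x = mact Γ m (mact Γ n x) := rfl

lemma mact_one (x : ∀ i, G ⧸ Γ i) : mact Γ 1 x = x := rfl

lemma mact_sigma (g : G) (x : ∀ i, G ⧸ Γ i) :
    mact Γ (sigmaHom Γ g) x = fun i => g • x i := rfl

variable {K : Type*} [MetricSpace K] (f : G → K)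

lemma memGbar_iff (u : ∀ i, Equiv.Perm (G ⧸ Γ i)) :
    u ∈ closure (Set.range (sigmaHom Γ)) ↔
      ∀ I : Finset ℕ, ∃ a : G, ∀ i ∈ I, sigmaHom Γ a i = u i := by
  rw [mem_closure_iff_nhds_basis (pi_discrete_nhds_basis u)]
  constructor
  · intro h I
    obtain ⟨y, ⟨a, rfl⟩, hy⟩ := h I trivial
    exact ⟨a, hy⟩
  · intro h I _
    obtain ⟨a, ha⟩ := h I
    exact ⟨sigmaHom Γ a, Set.mem_range_self a, ha⟩

lemma memFhat_iff (u : ∀ i, Equiv.Perm (G ⧸ Γ i)) (k : K) :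
    (u, k) ∈ closure (Set.range fun a : G => (sigmaHom Γ a, f a)) ↔
      ∀ (I : Finset ℕ) (ε : ℝ), 0 < ε →
        ∃ a : G, (∀ i ∈ I, sigmaHom Γ a i = u i) ∧ dist (f a) k < ε := by
  rw [mem_closure_iff_nhds_basis
    ((pi_discrete_nhds_basis u).prod_nhds (Metric.nhds_basis_ball (x := k)))]
  constructor
  · intro h I ε hε
    obtain ⟨y, ⟨a, rfl⟩, hy1, hy2⟩ := h (I, ε) ⟨trivial, hε⟩
    exact ⟨a, hy1, hy2⟩
  · rintro h ⟨I, ε⟩ ⟨-, hε⟩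
    obtain ⟨a, h1, h2⟩ := h I ε hε
    exact ⟨_, Set.mem_range_self a, h1, h2⟩

lemma memZ_iff (u : ∀ i, Equiv.Perm (G ⧸ Γ i)) (β : G → K) :
    (u, β) ∈ closure (Set.range fun a : G => (sigmaHom Γ a, a • f)) ↔
      ∀ (I : Finset ℕ) (J : Finset G) (ε : ℝ), 0 < ε →
        ∃ a : G, (∀ i ∈ I, sigmaHom Γ a i = u i) ∧
          ∀ g ∈ J, dist (f (g * a)) (β g) < ε := by
  rw [mem_closure_iff_nhds_basis
    ((pi_discrete_nhds_basis u).prod_nhds (pi_metric_nhds_basis β))]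
  constructor
  · intro h I J ε hε
    obtain ⟨y, ⟨a, rfl⟩, hy1, hy2⟩ := h (I, (J, ε)) ⟨trivial, hε⟩
    exact ⟨a, hy1, hy2⟩
  · rintro h ⟨I, J, ε⟩ ⟨-, hε⟩
    obtain ⟨a, h1, h2⟩ := h I J ε hε
    exact ⟨_, Set.mem_range_self a, h1, h2⟩

lemma memF_iff (hdec : ∀ i, Γ (i+1) ≤ Γ i) (h : Subodometer Γ) (k : K) :
    (h, k) ∈ closure {q : Subodometer Γ × K | ∃ a : G, q = (odoTau Γ hdec a, f a)} ↔
      ∀ (n : ℕ) (ε : ℝ), 0 < ε →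
        ∃ a : G, (∀ i ≤ n, (QuotientGroup.mk a : G ⧸ Γ i) = h.1 i) ∧ dist (f a) k < ε := by
  have hset : {q : Subodometer Γ × K | ∃ a : G, q = (odoTau Γ hdec a, f a)} =
      Set.range (fun a : G => (odoTau Γ hdec a, f a)) := by
    ext q; simp [Set.mem_range, eq_comm]
  rw [hset, mem_closure_iff_nhds_basis
    ((subod_nhds_basis h).prod_nhds (Metric.nhds_basis_ball (x := k)))]
  constructor
  · intro hh n ε hε
    obtain ⟨y, ⟨a, rfl⟩, hy1, hy2⟩ := hh (n, ε) ⟨trivial, hε⟩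
    exact ⟨a, hy1, hy2⟩
  · rintro hh ⟨n, ε⟩ ⟨-, hε⟩
    obtain ⟨a, h1, h2⟩ := hh n ε hε
    exact ⟨_, Set.mem_range_self a, h1, h2⟩

end PermM

section Semico
open Filter Topology Set
set_option linter.unusedSectionVars false

lemma exists_ultrafilter_tendsto {α X : Type*} [TopologicalSpace X] (e : α → X) (x : X)
    (hx : x ∈ closure (Set.range e)) :
    ∃ U : Ultrafilter α, Filter.Tendsto e U (𝓝 x) := by
  have h1 : (Filter.comap e (𝓝 x)).NeBot := by
    refine Filter.comap_neBot (fun t ht => ?_)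
    obtain ⟨y, hyt, a, rfl⟩ := mem_closure_iff_nhds.mp hx t ht
    exact ⟨a, hyt⟩
  refine ⟨Ultrafilter.of (Filter.comap e (𝓝 x)), ?_⟩
  rw [Filter.tendsto_iff_comap]
  exact Ultrafilter.of_le _

variable {G : Type*} [Group G] [TopologicalSpace G] [DiscreteTopology G]
variable {Γ : ℕ → Subgroup G} {K : Type*} [MetricSpace K]

/-- Extract the `ε`–level characterization of continuity of a semicocycle. -/
lemma fcont_char {f : G → K} (hdec : ∀ i, Γ (i+1) ≤ Γ i)
    (hf : @Continuous G K
      (TopologicalSpace.induced (odoTau Γ hdec) inferInstance) inferInstance f)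
    (a : G) (ε : ℝ) (hε : 0 < ε) :
    ∃ n : ℕ, ∀ b : G,
      (∀ i ≤ n, (QuotientGroup.mk b : G ⧸ Γ i) = QuotientGroup.mk a) →
      dist (f b) (f a) < ε := by
  have hca := @Continuous.tendsto G K
    (TopologicalSpace.induced (odoTau Γ hdec) inferInstance) _ f hf a
  rw [nhds_induced] at hca
  have hmem : f ⁻¹' Metric.ball (f a) ε ∈
      Filter.comap (odoTau Γ hdec) (𝓝 (odoTau Γ hdec a)) :=
    hca (Metric.ball_mem_nhds _ hε)
  rw [((subod_nhds_basis (odoTau Γ hdec a)).comap (odoTau Γ hdec)).mem_iff] at hmem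
  obtain ⟨n, -, hsub⟩ := hmem
  refine ⟨n, fun b hb => ?_⟩
  have : b ∈ odoTau Γ hdec ⁻¹' {y : Subodometer Γ | ∀ i ≤ n, y.1 i = (odoTau Γ hdec a).1 i} :=
    fun i hi => hb i hi
  exact Metric.mem_ball.mp (hsub this)

variable (Γ) in
/-- The closure of the graph of `f` over the permutation-product group. -/
def GrH (f : G → K) : Set ((∀ i, Equiv.Perm (G ⧸ Γ i)) × K) :=
  closure (Set.range fun a : G => (sigmaHom Γ a, f a))

variable (Γ) in
/-- The closure of the orbit-graph of `f` over the permutation-product group. -/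
def Zhat (f : G → K) : Set ((∀ i, Equiv.Perm (G ⧸ Γ i)) × (G → K)) :=
  closure (Set.range fun a : G => (sigmaHom Γ a, a • f))

/-- If `s` is in the closure of `σ(G)` and fixes the identity sequence, then
right-translating by `s` does not change the fibers of the graph closure. -/
lemma Fhat_stab {f : G → K} (hdec : ∀ i, Γ (i+1) ≤ Γ i)
    (hf : @Continuous G K
      (TopologicalSpace.induced (odoTau Γ hdec) inferInstance) inferInstance f)
    (w s : ∀ i, Equiv.Perm (G ⧸ Γ i))
    (hs : s ∈ closure (Set.range (sigmaHom Γ)))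
    (hse : ∀ i, s i (QuotientGroup.mk 1) = QuotientGroup.mk 1)
    (k : K) (hk : (w, k) ∈ GrH Γ f) : (w * s, k) ∈ GrH Γ f := by
  rw [GrH, memFhat_iff] at hk ⊢
  intro I ε hε
  obtain ⟨a, ha, hak⟩ := hk I (ε/2) (by linarith)
  obtain ⟨n, hn⟩ := fcont_char hdec hf a (ε/2) (by linarith)
  obtain ⟨c, hcs⟩ := (memGbar_iff Γ s).mp hs (I ∪ Finset.range (n+1))
  refine ⟨a * c, ?_, ?_⟩
  · intro i hi
    rw [map_mul]
    show sigmaHom Γ a i * sigmaHom Γ c i = (w * s) i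
    rw [ha i hi, hcs i (Finset.mem_union_left _ hi)]
    rfl
  · have hpos : ∀ i ≤ n, (QuotientGroup.mk (a * c) : G ⧸ Γ i) = QuotientGroup.mk a := by
      intro i hi
      have h1 : (QuotientGroup.mk c : G ⧸ Γ i) = QuotientGroup.mk 1 := by
        have := hcs i (Finset.mem_union_right _ (Finset.mem_range.mpr (Nat.lt_succ_of_le hi)))
        calc (QuotientGroup.mk c : G ⧸ Γ i) = sigmaHom Γ c i (QuotientGroup.mk 1) := by
                rw [sigmaHom_apply, qmk_smul, mul_one]
          _ = s i (QuotientGroup.mk 1) := by rw [this]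
          _ = QuotientGroup.mk 1 := hse i
      calc (QuotientGroup.mk (a * c) : G ⧸ Γ i) = a • (QuotientGroup.mk c : G ⧸ Γ i) :=
            (qmk_smul a c i).symm
        _ = a • (QuotientGroup.mk 1 : G ⧸ Γ i) := by rw [h1]
        _ = QuotientGroup.mk a := by rw [qmk_smul, mul_one]
    have := hn (a * c) hpos
    calc dist (f (a * c)) k ≤ dist (f (a * c)) (f a) + dist (f a) k := dist_triangle _ _ _
      _ < ε/2 + ε/2 := add_lt_add this hak
      _ = ε := by ring
/-- Key transfer lemma: if `β` lies over both `u` and `v`, then fibers of the graph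
closure over `w*u` are contained in those over `w*v`. -/
lemma Fhat_transfer {f : G → K} (hdec : ∀ i, Γ (i+1) ≤ Γ i)
    (hf : @Continuous G K
      (TopologicalSpace.induced (odoTau Γ hdec) inferInstance) inferInstance f)
    (u v w : ∀ i, Equiv.Perm (G ⧸ Γ i)) (β : G → K)
    (hu : (u, β) ∈ Zhat Γ f) (hv : (v, β) ∈ Zhat Γ f)
    (k : K) (hk : (w * u, k) ∈ GrH Γ f) : (w * v, k) ∈ GrH Γ f := by
  rw [GrH, memFhat_iff] at hk ⊢
  rw [Zhat, memZ_iff] at hu hv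
  intro I ε hε
  have hε4 : 0 < ε/4 := by linarith
  -- step 1 : approximate (w*u, k)
  obtain ⟨a, ha, hak⟩ := hk I (ε/4) hε4
  -- step 2 : continuity level at a
  obtain ⟨n, hn⟩ := fcont_char hdec hf a (ε/4) hε4
  -- step 3 : c₀ approximating u on I ∪ [0..n]
  obtain ⟨c₀, hc₀, -⟩ := hu (I ∪ Finset.range (n+1)) ∅ 1 one_pos
  set g := a * c₀⁻¹ with hg
  -- step 5 : c₁ approximating u on [0..n] with value estimate at g
  obtain ⟨c₁, hc₁, hc₁v⟩ := hu (Finset.range (n+1)) {g} (ε/4) hε4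
  -- step 6 : position of g * c₁
  have hpos : ∀ i ≤ n, (QuotientGroup.mk (g * c₁) : G ⧸ Γ i) = QuotientGroup.mk a := by
    intro i hi
    have hmem : i ∈ Finset.range (n+1) := Finset.mem_range.mpr (Nat.lt_succ_of_le hi)
    have e1 : sigmaHom Γ c₀ i = u i := hc₀ i (Finset.mem_union_right _ hmem)
    have e2 : sigmaHom Γ c₁ i = u i := hc₁ i hmem
    have : (QuotientGroup.mk (g * c₁) : G ⧸ Γ i)
        = sigmaHom Γ a i ((sigmaHom Γ c₀ i)⁻¹ (sigmaHom Γ c₁ i (QuotientGroup.mk 1))) := by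
      rw [hg]
      show _ = (a • ((c₀⁻¹ : G) • (c₁ • (QuotientGroup.mk 1 : G ⧸ Γ i))))
      rw [qmk_smul, qmk_smul, qmk_smul, mul_one]
      rw [mul_assoc]
    rw [this, e1, e2, Equiv.Perm.inv_def, Equiv.symm_apply_apply, sigmaHom_apply, qmk_smul, mul_one]
  have h6 : dist (f (g * c₁)) (f a) < ε/4 := hn _ hpos
  -- step 7 : β g is close to k
  have h7 : dist (β g) k < 3*(ε/4) := by
    have hgv := hc₁v g (Finset.mem_singleton_self g)
    calc dist (β g) k ≤ dist (β g) (f (g * c₁)) + dist (f (g * c₁)) (f a) + dist (f a) k :=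
          dist_triangle4 _ _ _ _
      _ < ε/4 + ε/4 + ε/4 := by
          refine add_lt_add (add_lt_add ?_ h6) hak
          rw [dist_comm]; exact hgv
      _ = 3*(ε/4) := by ring
  -- step 8 : d₁ approximating v on I with value estimate at g
  obtain ⟨d₁, hd₁, hd₁v⟩ := hv I {g} (ε/4) hε4
  refine ⟨g * d₁, ?_, ?_⟩
  · intro i hi
    have e0 : sigmaHom Γ c₀ i = u i := hc₀ i (Finset.mem_union_left _ hi)
    have e1 : sigmaHom Γ a i = (w * u) i := ha i hi
    have e2 : sigmaHom Γ d₁ i = v i := hd₁ i hi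
    rw [map_mul]
    show sigmaHom Γ g i * sigmaHom Γ d₁ i = (w * v) i
    rw [hg, map_mul, map_inv]
    show sigmaHom Γ a i * (sigmaHom Γ c₀ i)⁻¹ * sigmaHom Γ d₁ i = (w * v) i
    rw [e0, e1, e2]
    show w i * u i * (u i)⁻¹ * v i = w i * v i
    group
  · have hgd := hd₁v g (Finset.mem_singleton_self g)
    calc dist (f (g * d₁)) k ≤ dist (f (g * d₁)) (β g) + dist (β g) k := dist_triangle _ _ _
      _ < ε/4 + 3*(ε/4) := add_lt_add hgd h7
      _ = ε := by ring
lemma compat_mact {u : ∀ i, Equiv.Perm (G ⧸ Γ i)}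
    (hu : u ∈ closure (Set.range (sigmaHom Γ))) {x : ∀ i, G ⧸ Γ i}
    (hx : Compat Γ x) : Compat Γ (mact Γ u x) := by
  intro i g hg
  obtain ⟨a, ha⟩ := (memGbar_iff Γ u).mp hu {i, i+1}
  have hai : sigmaHom Γ a i = u i := ha i (by simp)
  have hai1 : sigmaHom Γ a (i+1) = u (i+1) := ha (i+1) (by simp)
  have hg' : (QuotientGroup.mk g : G ⧸ Γ (i+1)) = (fun j => a • x j) (i+1) := by
    show _ = a • x (i+1)
    rw [← sigmaHom_apply, hai1]
    exact hg
  have := compat_smul Γ a x hx i g hg'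
  show (QuotientGroup.mk g : G ⧸ Γ i) = u i (x i)
  rw [← hai, sigmaHom_apply]
  exact this

/-- Transfer between fibers of the graph closure over the subodometer and fibers over
the permutation group. -/
lemma Fset_eq_Fhat {f : G → K} (hdec : ∀ i, Γ (i+1) ≤ Γ i) (hfin : ∀ n, (Γ n).FiniteIndex)
    (hf : @Continuous G K
      (TopologicalSpace.induced (odoTau Γ hdec) inferInstance) inferInstance f)
    (w : ∀ i, Equiv.Perm (G ⧸ Γ i)) (hw : w ∈ closure (Set.range (sigmaHom Γ)))
    (h : Subodometer Γ) (hh : ∀ i, w i (QuotientGroup.mk 1) = h.1 i) (k : K) :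
    ((h, k) ∈ closure {q : Subodometer Γ × K | ∃ a : G, q = (odoTau Γ hdec a, f a)}) ↔
      (w, k) ∈ GrH Γ f := by
  constructor
  · -- hard direction: uses an ultrafilter limit and the stabilizer lemma
    intro hk
    have hset : {q : Subodometer Γ × K | ∃ a : G, q = (odoTau Γ hdec a, f a)} =
        Set.range (fun a : G => (odoTau Γ hdec a, f a)) := by
      ext q; simp [Set.mem_range, eq_comm]
    rw [hset] at hk
    obtain ⟨U, hU⟩ := exists_ultrafilter_tendsto _ _ hk
    haveI : ∀ i, DiscreteTopology (G ⧸ Γ i) := fun i => qdisc i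
    haveI : ∀ i, Finite (G ⧸ Γ i) := fun i =>
      @Subgroup.finite_quotient_of_finiteIndex _ _ _ (hfin i)
    haveI : ∀ i, CompactSpace (Equiv.Perm (G ⧸ Γ i)) := fun i => Finite.compactSpace
    -- limit of sigmaHom along U
    obtain ⟨u', -, hu'⟩ := CompactSpace.isCompact_univ.ultrafilter_le_nhds
      (Ultrafilter.map (sigmaHom Γ) U) (by simp)
    have hu'T : Filter.Tendsto (sigmaHom Γ) U (𝓝 u') := hu'
    have hu'cl : u' ∈ closure (Set.range (sigmaHom Γ)) :=
      mem_closure_of_tendsto hu'T (Filter.Eventually.of_forall (fun a => Set.mem_range_self a))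
    -- coordinates of u' at the identity sequence
    have hcoord : ∀ i, u' i (QuotientGroup.mk 1) = h.1 i := by
      intro i
      have h1 : Filter.Tendsto (fun a => sigmaHom Γ a i) U (𝓝 (u' i)) :=
        ((continuous_apply i).tendsto u').comp hu'T
      have h2 : Filter.Tendsto (fun a => (odoTau Γ hdec a).1 i) U (𝓝 (h.1 i)) := by
        have : Filter.Tendsto (fun a => (odoTau Γ hdec a, f a)) U (𝓝 (h, k)) := hU
        exact ((continuous_apply i).tendsto h.1).comp
          ((continuous_subtype_val.tendsto h).comp (this.fst_nhds))
      rw [nhds_discrete, Filter.tendsto_pure] at h1 h2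
      obtain ⟨a, ha1, ha2⟩ := (h1.and h2).exists
      rw [← ha1, sigmaHom_apply, qmk_smul, mul_one]
      exact ha2
    -- k lies in the fiber over u'
    have hk' : (u', k) ∈ GrH Γ f := by
      have hT : Filter.Tendsto (fun a : G => (sigmaHom Γ a, f a)) U (𝓝 (u', k)) := by
        refine Filter.Tendsto.prodMk_nhds hu'T ?_
        exact hU.snd_nhds
      exact mem_closure_of_tendsto hT (Filter.Eventually.of_forall (fun a => Set.mem_range_self a))
    -- replace u' by w using the stabilizer lemma
    have hGsub : ∀ (m m' : ∀ i, Equiv.Perm (G ⧸ Γ i)),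
        m ∈ closure (Set.range (sigmaHom Γ)) → m' ∈ closure (Set.range (sigmaHom Γ)) →
        m⁻¹ * m' ∈ closure (Set.range (sigmaHom Γ)) := by
      intro m m' hm hm'
      have hrange : (Set.range (sigmaHom Γ)) = ((sigmaHom Γ).range : Set (∀ i, Equiv.Perm (G ⧸ Γ i))) := by
        simp [MonoidHom.coe_range]
      rw [hrange] at hm hm' ⊢
      have hm2 : m ∈ (sigmaHom Γ).range.topologicalClosure := hm
      have hm2' : m' ∈ (sigmaHom Γ).range.topologicalClosure := hm'
      have : m⁻¹ * m' ∈ (sigmaHom Γ).range.topologicalClosure := mul_mem (inv_mem hm2) hm2'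
      exact this
    have hs : u'⁻¹ * w ∈ closure (Set.range (sigmaHom Γ)) := hGsub u' w hu'cl hw
    have hse : ∀ i, (u'⁻¹ * w) i (QuotientGroup.mk 1) = QuotientGroup.mk 1 := by
      intro i
      show (u' i)⁻¹ (w i (QuotientGroup.mk 1)) = QuotientGroup.mk 1
      rw [hh i, ← hcoord i, Equiv.Perm.inv_def, Equiv.symm_apply_apply]
    have := Fhat_stab hdec hf u' (u'⁻¹ * w) hs hse k hk'
    rwa [mul_inv_cancel_left] at this
  · intro hk
    rw [memF_iff]
    rw [GrH, memFhat_iff] at hk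
    intro n ε hε
    obtain ⟨a, ha, hak⟩ := hk (Finset.range (n+1)) ε hε
    refine ⟨a, ?_, hak⟩
    intro i hi
    have := ha i (Finset.mem_range.mpr (Nat.lt_succ_of_le hi))
    rw [← hh i, ← this, sigmaHom_apply, qmk_smul, mul_one]
/-- If `β` lies over a permutation sequence fixing the identity sequence, then `β = f`. -/
lemma Z_fiber_id {f : G → K} (hdec : ∀ i, Γ (i+1) ≤ Γ i)
    (hf : @Continuous G K
      (TopologicalSpace.induced (odoTau Γ hdec) inferInstance) inferInstance f)
    (u : ∀ i, Equiv.Perm (G ⧸ Γ i)) (β : G → K) (hu : (u, β) ∈ Zhat Γ f)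
    (hid : ∀ i, u i (QuotientGroup.mk 1) = QuotientGroup.mk 1) : β = f := by
  rw [Zhat, memZ_iff] at hu
  funext g
  by_contra hne
  set ε := dist (β g) (f g) with hεdef
  have hε : 0 < ε := dist_pos.mpr hne
  obtain ⟨n, hn⟩ := fcont_char hdec hf g (ε/2) (by linarith)
  obtain ⟨a, ha, hav⟩ := hu (Finset.range (n+1)) {g} (ε/2) (by linarith)
  have hpos : ∀ i ≤ n, (QuotientGroup.mk (g * a) : G ⧸ Γ i) = QuotientGroup.mk g := by
    intro i hi
    have h1 : (QuotientGroup.mk a : G ⧸ Γ i) = QuotientGroup.mk 1 := by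
      rw [show (QuotientGroup.mk a : G ⧸ Γ i) = sigmaHom Γ a i (QuotientGroup.mk 1) by
        rw [sigmaHom_apply, qmk_smul, mul_one]]
      rw [ha i (Finset.mem_range.mpr (Nat.lt_succ_of_le hi))]
      exact hid i
    calc (QuotientGroup.mk (g * a) : G ⧸ Γ i) = g • (QuotientGroup.mk a : G ⧸ Γ i) :=
          (qmk_smul g a i).symm
      _ = g • (QuotientGroup.mk 1 : G ⧸ Γ i) := by rw [h1]
      _ = QuotientGroup.mk g := by rw [qmk_smul, mul_one]
  have h2 := hn (g * a) hpos
  have h3 := hav g (Finset.mem_singleton_self g)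
  have : ε < ε := by
    calc ε = dist (β g) (f g) := hεdef
      _ ≤ dist (β g) (f (g * a)) + dist (f (g * a)) (f g) := dist_triangle _ _ _
      _ < ε/2 + ε/2 := add_lt_add (by rw [dist_comm]; exact h3) h2
      _ = ε := by ring
  exact absurd this (lt_irrefl ε)

lemma Zhat_fst {f : G → K} {u : ∀ i, Equiv.Perm (G ⧸ Γ i)} {β : G → K}
    (h : (u, β) ∈ Zhat Γ f) : u ∈ closure (Set.range (sigmaHom Γ)) := by
  have h1 : u ∈ Prod.fst '' (Zhat Γ f) := ⟨(u, β), h, rfl⟩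
  have h2 := image_closure_subset_closure_image
    (f := (Prod.fst : (∀ i, Equiv.Perm (G ⧸ Γ i)) × (G → K) → ∀ i, Equiv.Perm (G ⧸ Γ i)))
    (s := Set.range (fun a : G => (sigmaHom Γ a, a • f))) continuous_fst
  have h3 : (Prod.fst : (∀ i, Equiv.Perm (G ⧸ Γ i)) × (G → K) → ∀ i, Equiv.Perm (G ⧸ Γ i)) ''
      Set.range (fun a : G => (sigmaHom Γ a, a • f)) = Set.range (sigmaHom Γ) := by
    rw [← Set.range_comp]; rfl
  rw [Zhat] at h1
  have := h2 h1
  rwa [h3] at this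

lemma sigma_mul_closure (g : G) {u : ∀ i, Equiv.Perm (G ⧸ Γ i)}
    (hu : u ∈ closure (Set.range (sigmaHom Γ))) :
    sigmaHom Γ g * u ∈ closure (Set.range (sigmaHom Γ)) := by
  have hrange : (Set.range (sigmaHom Γ))
      = ((sigmaHom Γ).range : Set (∀ i, Equiv.Perm (G ⧸ Γ i))) := by
    simp [MonoidHom.coe_range]
  rw [hrange] at hu ⊢
  have h1 : u ∈ (sigmaHom Γ).range.topologicalClosure := hu
  have h2 : sigmaHom Γ g ∈ (sigmaHom Γ).range.topologicalClosure :=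
    (sigmaHom Γ).range.le_topologicalClosure ⟨g, rfl⟩
  have : sigmaHom Γ g * u ∈ (sigmaHom Γ).range.topologicalClosure := mul_mem h2 h1
  exact this

lemma Zhat_smul {f : G → K} (g : G) {u : ∀ i, Equiv.Perm (G ⧸ Γ i)} {β : G → K}
    (h : (u, β) ∈ Zhat Γ f) : (sigmaHom Γ g * u, g • β) ∈ Zhat Γ f := by
  have hcont : Continuous (fun p : (∀ i, Equiv.Perm (G ⧸ Γ i)) × (G → K) =>
      (sigmaHom Γ g * p.1, g • p.2)) := by
    refine Continuous.prodMk ?_ ?_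
    · refine continuous_pi (fun i => ?_)
      exact (continuous_of_discreteTopology
        (f := fun y : Equiv.Perm (G ⧸ Γ i) => sigmaHom Γ g i * y)).comp
        ((continuous_apply i).comp continuous_fst)
    · refine continuous_pi (fun g' => ?_)
      exact (continuous_apply (g' * g)).comp continuous_snd
  have himg : (fun p : (∀ i, Equiv.Perm (G ⧸ Γ i)) × (G → K) =>
      (sigmaHom Γ g * p.1, g • p.2)) '' Set.range (fun a : G => (sigmaHom Γ a, a • f)) ⊆
      Set.range (fun a : G => (sigmaHom Γ a, a • f)) := by
    rintro q ⟨p, ⟨a, rfl⟩, rfl⟩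
    refine ⟨g * a, ?_⟩
    show (sigmaHom Γ (g * a), (g * a) • f)
      = (sigmaHom Γ g * sigmaHom Γ a, g • (a • f))
    rw [map_mul, mul_smul]
  have := image_closure_subset_closure_image
    (s := Set.range (fun a : G => (sigmaHom Γ a, a • f))) hcont
  have h2 : (sigmaHom Γ g * u, g • β) ∈
      closure ((fun p : (∀ i, Equiv.Perm (G ⧸ Γ i)) × (G → K) =>
        (sigmaHom Γ g * p.1, g • p.2)) '' Set.range (fun a : G => (sigmaHom Γ a, a • f))) :=
    this (Set.mem_image_of_mem _ h)
  exact closure_mono himg h2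

/-- Well-definedness of the position map: two permutation limits over the same orbit
point have the same action on the identity sequence. -/
lemma position_unique {f : G → K} (hdec : ∀ i, Γ (i+1) ≤ Γ i) (hfin : ∀ n, (Γ n).FiniteIndex)
    (hf : @Continuous G K
      (TopologicalSpace.induced (odoTau Γ hdec) inferInstance) inferInstance f)
    (hsep : ∀ h₁ h₂ : Subodometer Γ, h₁ ≠ h₂ → ∃ g : G,
      {k : K | (g • h₁, k) ∈
        closure {q : Subodometer Γ × K | ∃ a : G, q = (odoTau Γ hdec a, f a)}} ≠
      {k : K | (g • h₂, k) ∈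
        closure {q : Subodometer Γ × K | ∃ a : G, q = (odoTau Γ hdec a, f a)}})
    (u v : ∀ i, Equiv.Perm (G ⧸ Γ i)) (β : G → K)
    (hu : (u, β) ∈ Zhat Γ f) (hv : (v, β) ∈ Zhat Γ f) :
    mact Γ u (odoE Γ hdec).1 = mact Γ v (odoE Γ hdec).1 := by
  by_contra hne
  have hucl := Zhat_fst hu
  have hvcl := Zhat_fst hv
  set h₁ : Subodometer Γ := ⟨mact Γ u (odoE Γ hdec).1, compat_mact hucl (odoE Γ hdec).2⟩
  set h₂ : Subodometer Γ := ⟨mact Γ v (odoE Γ hdec).1, compat_mact hvcl (odoE Γ hdec).2⟩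
  have hne12 : h₁ ≠ h₂ := fun hcon => hne (congrArg Subtype.val hcon)
  obtain ⟨g₀, hgne⟩ := hsep h₁ h₂ hne12
  apply hgne
  ext k
  have hw1 : sigmaHom Γ g₀ * u ∈ closure (Set.range (sigmaHom Γ)) := sigma_mul_closure g₀ hucl
  have hw2 : sigmaHom Γ g₀ * v ∈ closure (Set.range (sigmaHom Γ)) := sigma_mul_closure g₀ hvcl
  have hcoord1 : ∀ i, (sigmaHom Γ g₀ * u) i (QuotientGroup.mk 1) = (g₀ • h₁).1 i :=
    fun i => rfl
  have hcoord2 : ∀ i, (sigmaHom Γ g₀ * v) i (QuotientGroup.mk 1) = (g₀ • h₂).1 i :=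
    fun i => rfl
  rw [Set.mem_setOf_eq, Set.mem_setOf_eq]
  rw [Fset_eq_Fhat hdec hfin hf _ hw1 (g₀ • h₁) hcoord1 k,
      Fset_eq_Fhat hdec hfin hf _ hw2 (g₀ • h₂) hcoord2 k]
  constructor
  · exact Fhat_transfer hdec hf u v (sigmaHom Γ g₀) β hu hv k
  · exact Fhat_transfer hdec hf v u (sigmaHom Γ g₀) β hv hu k
lemma reverse_dir {G X : Type*} [Group G] [TopologicalSpace G]
    [DiscreteTopology G] [MetricSpace X] [CompactSpace X] [MulAction G X]
    (Γ : ℕ → Subgroup G) (hdec : ∀ n, Γ (n + 1) ≤ Γ n) (hfin : ∀ n, (Γ n).FiniteIndex)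
    {K : Type} [MetricSpace K] [CompactSpace K] (f : G → K)
    (hf : @Continuous G K
      (TopologicalSpace.induced (odoTau Γ hdec) inferInstance) inferInstance f)
    (hsep : ∀ h₁ h₂ : Subodometer Γ, h₁ ≠ h₂ → ∃ g : G,
      {k : K | (g • h₁, k) ∈
        closure {q : Subodometer Γ × K | ∃ a : G, q = (odoTau Γ hdec a, f a)}} ≠
      {k : K | (g • h₂, k) ∈
        closure {q : Subodometer Γ × K | ∃ a : G, q = (odoTau Γ hdec a, f a)}})
    (φ : X → (G → K)) (hφc : Continuous φ) (hφi : Function.Injective φ)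
    (hφe : ∀ (g : G) (x : X), φ (g • x) = g • φ x)
    (hφr : Set.range φ = closure (Set.range fun g : G => g • f)) :
    ∃ π : X → Subodometer Γ, IsFactorMap G π ∧ ∃! x : X, π x = odoE Γ hdec := by
  classical
  haveI : CompactSpace (Subodometer Γ) := subod_compact hfin
  haveI : ∀ i, DiscreteTopology (G ⧸ Γ i) := fun i => qdisc i
  haveI : ∀ i, Finite (G ⧸ Γ i) := fun i =>
    @Subgroup.finite_quotient_of_finiteIndex _ _ _ (hfin i)
  haveI : ∀ i, CompactSpace (G ⧸ Γ i) := fun i => Finite.compactSpace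
  haveI : ∀ i, CompactSpace (Equiv.Perm (G ⧸ Γ i)) := fun i => Finite.compactSpace
  -- the base point
  have hfΩ : f ∈ Set.range φ := by
    rw [hφr]; exact subset_closure ⟨1, one_smul G f⟩
  obtain ⟨x₀, hx₀⟩ := hfΩ
  -- every point has a position
  have hL : ∀ x : X, ∃ u, (u, φ x) ∈ Zhat Γ f := by
    intro x
    have hx : φ x ∈ closure (Set.range fun g : G => g • f) := by
      rw [← hφr]; exact Set.mem_range_self x
    obtain ⟨U, hU⟩ := exists_ultrafilter_tendsto _ _ hx
    obtain ⟨u, -, huT⟩ := CompactSpace.isCompact_univ.ultrafilter_le_nhds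
      (Ultrafilter.map (sigmaHom Γ) U) (by simp)
    have huT' : Filter.Tendsto (sigmaHom Γ) U (𝓝 u) := huT
    refine ⟨u, ?_⟩
    exact mem_closure_of_tendsto (huT'.prodMk_nhds hU)
      (Filter.Eventually.of_forall (fun a => Set.mem_range_self a))
  -- the position map
  set π : X → Subodometer Γ := fun x =>
    ⟨mact Γ (Classical.choose (hL x)) (odoE Γ hdec).1,
      compat_mact (Zhat_fst (Classical.choose_spec (hL x))) (odoE Γ hdec).2⟩ with hπ
  have hwd : ∀ (x : X) (u), (u, φ x) ∈ Zhat Γ f →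
      (π x).1 = mact Γ u (odoE Γ hdec).1 := by
    intro x u hu
    exact position_unique hdec hfin hf hsep _ u (φ x) (Classical.choose_spec (hL x)) hu
  -- π x₀ = e
  have h1f : ((1 : ∀ i, Equiv.Perm (G ⧸ Γ i)), φ x₀) ∈ Zhat Γ f := by
    rw [hx₀]
    refine subset_closure ⟨1, ?_⟩
    show (sigmaHom Γ 1, (1 : G) • f) = (1, f)
    rw [map_one, one_smul]
  have hπx₀ : π x₀ = odoE Γ hdec := by
    apply Subtype.ext
    rw [hwd x₀ 1 h1f]
    rfl
  -- equivariance
  have hπequi : ∀ (g : G) (x : X), π (g • x) = g • π x := by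
    intro g x
    have hu := Classical.choose_spec (hL x)
    have h1 : (sigmaHom Γ g * Classical.choose (hL x), φ (g • x)) ∈ Zhat Γ f := by
      rw [hφe]
      exact Zhat_smul g hu
    apply Subtype.ext
    rw [hwd (g • x) _ h1]
    rfl
  -- continuity
  have hπcont : Continuous π := by
    rw [continuous_iff_isClosed]
    intro C hC
    have hCc : IsCompact (Subtype.val '' C : Set (∀ i, G ⧸ Γ i)) :=
      (hC.isCompact).image continuous_subtype_val
    have hCcl : IsClosed (Subtype.val '' C : Set (∀ i, G ⧸ Γ i)) := hCc.isClosed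
    set D : Set (X × (∀ i, Equiv.Perm (G ⧸ Γ i))) :=
      {p | (p.2, φ p.1) ∈ Zhat Γ f ∧ mact Γ p.2 (odoE Γ hdec).1 ∈ Subtype.val '' C} with hD
    have hDcl : IsClosed D := by
      refine IsClosed.inter ?_ ?_
      · exact (isClosed_closure).preimage (continuous_snd.prodMk (hφc.comp continuous_fst))
      · refine hCcl.preimage ?_
        refine continuous_pi (fun i => ?_)
        exact (continuous_of_discreteTopology
          (f := fun y : Equiv.Perm (G ⧸ Γ i) => y (QuotientGroup.mk 1))).comp
          ((continuous_apply i).comp continuous_snd)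
    have hDc : IsCompact D := hDcl.isCompact
    have himg : π ⁻¹' C = Prod.fst '' D := by
      ext x
      constructor
      · intro hx
        refine ⟨(x, Classical.choose (hL x)), ?_, rfl⟩
        refine ⟨Classical.choose_spec (hL x), ?_⟩
        exact ⟨π x, hx, rfl⟩
      · rintro ⟨⟨x', u⟩, ⟨hu, hval⟩, rfl⟩
        obtain ⟨c, hcC, hceq⟩ := hval
        have hpc : π x' = c := Subtype.ext (by rw [hwd x' u hu, hceq])
        show π x' ∈ C
        rw [hpc]; exact hcC
    rw [himg]
    exact (hDc.image continuous_fst).isClosed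
  -- surjectivity
  have hπsurj : Function.Surjective π := by
    intro h
    have hcl : IsClosed (Set.range π) := (isCompact_range hπcont).isClosed
    have hsub : Set.range (odoTau Γ hdec) ⊆ Set.range π := by
      rintro y ⟨g, rfl⟩
      refine ⟨g • x₀, ?_⟩
      rw [hπequi, hπx₀, smul_odoE]
    have := tau_dense hdec h
    have h2 : h ∈ closure (Set.range π) := closure_mono hsub this
    rwa [hcl.closure_eq] at h2
  refine ⟨π, ⟨hπcont, hπsurj, hπequi⟩, x₀, hπx₀, ?_⟩
  -- uniqueness of the point over e
  intro y hy
  have hu := Classical.choose_spec (hL y)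
  have hval : mact Γ (Classical.choose (hL y)) (odoE Γ hdec).1 = (odoE Γ hdec).1 := by
    rw [← hwd y _ hu, hy]
  have hid : ∀ i, Classical.choose (hL y) i (QuotientGroup.mk 1)
      = QuotientGroup.mk 1 := fun i => congrFun hval i
  have hβ : φ y = f := Z_fiber_id hdec hf _ _ hu hid
  exact hφi (by rw [hβ, hx₀])
lemma forward_dir {G X : Type*} [Group G] [TopologicalSpace G]
    [DiscreteTopology G] [MetricSpace X] [CompactSpace X] [MulAction G X]
    (hc : ∀ g : G, Continuous fun x : X => g • x)
    (hmin : ∀ x : X, Dense (Set.range fun g : G => g • x))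
    (Γ : ℕ → Subgroup G) (hdec : ∀ n, Γ (n + 1) ≤ Γ n)
    (π : X → Subodometer Γ) (hπ : IsFactorMap G π) (hex : ∃! x : X, π x = odoE Γ hdec) :
    ∃ (K : Type) (_ : MetricSpace K), CompactSpace K ∧
      ∃ f : G → K,
        (@Continuous G K
          (TopologicalSpace.induced (odoTau Γ hdec) inferInstance) inferInstance f) ∧
        (∀ h₁ h₂ : Subodometer Γ, h₁ ≠ h₂ → ∃ g : G,
          {k : K | (g • h₁, k) ∈
            closure {q : Subodometer Γ × K | ∃ a : G, q = (odoTau Γ hdec a, f a)}} ≠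
          {k : K | (g • h₂, k) ∈
            closure {q : Subodometer Γ × K | ∃ a : G, q = (odoTau Γ hdec a, f a)}}) ∧
        ∃ φ : X → (G → K), Continuous φ ∧ Function.Injective φ ∧
          (∀ (g : G) (x : X), φ (g • x) = g • φ x) ∧
          Set.range φ = closure (Set.range fun g : G => g • f) := by
  classical
  obtain ⟨x₀, hx₀e, hx₀u⟩ := hex
  obtain ⟨hπc, hπs, hπe⟩ := hπ
  -- the compact metric model in universe 0
  set ψ := kuratowskiEmbedding X with hψ
  have hψiso : Isometry ψ := kuratowskiEmbedding.isometry X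
  have hψinj : Function.Injective ψ := hψiso.injective
  have hKc : IsCompact (Set.range ψ) := isCompact_range hψiso.continuous
  set K : Type := ↥(Set.range ψ) with hK
  set ψK : X → K := fun x => ⟨ψ x, Set.mem_range_self x⟩ with hψK
  have hψKiso : Isometry ψK :=
    Isometry.of_dist_eq (fun a b => by rw [Subtype.dist_eq]; exact hψiso.dist_eq a b)
  have hψKc : Continuous ψK := hψKiso.continuous
  have hψKsurj : Function.Surjective ψK := by
    rintro ⟨y, x, hx⟩
    exact ⟨x, Subtype.ext hx⟩
  haveI : CompactSpace K := ⟨Set.range_eq_univ.mpr hψKsurj ▸ isCompact_range hψKc⟩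
  have hψKi : Function.Injective ψK := fun a b hab =>
    hψinj (congrArg Subtype.val hab)
  set f : G → K := fun g => ψK (g • x₀) with hfdef
  set φ : X → (G → K) := fun x g => ψK (g • x) with hφdef
  -- basic facts about π
  have hπτ : ∀ g : G, π (g • x₀) = odoTau Γ hdec g := by
    intro g
    rw [hπe, hx₀e, smul_odoE]
  have hfib : ∀ (y : X) (g : G), π y = odoTau Γ hdec g → y = g • x₀ := by
    intro y g hy
    have hge : g⁻¹ • odoTau Γ hdec g = odoE Γ hdec := by
      apply Subtype.ext
      funext i
      show g⁻¹ • (QuotientGroup.mk g : G ⧸ Γ i) = QuotientGroup.mk 1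
      rw [qmk_smul, inv_mul_cancel]
    have h1 : π (g⁻¹ • y) = odoE Γ hdec := by rw [hπe, hy, hge]
    have h2 := hx₀u _ h1
    calc y = g • (g⁻¹ • y) := (smul_inv_smul g y).symm
      _ = g • x₀ := by rw [h2]
  -- continuity of the orbit map for the induced topology
  have horb : @Continuous G X
      (TopologicalSpace.induced (odoTau Γ hdec) inferInstance) _
      (fun g => g • x₀) := by
    rw [@continuous_iff_continuousAt G X
      (TopologicalSpace.induced (odoTau Γ hdec) inferInstance) _]
    intro g₀
    show Filter.Tendsto (fun g => g • x₀)
      (@nhds G (TopologicalSpace.induced (odoTau Γ hdec) inferInstance) g₀)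
      (𝓝 (g₀ • x₀))
    rw [nhds_induced]
    rw [Filter.tendsto_iff_ultrafilter]
    intro U hU
    obtain ⟨y, -, hy⟩ := CompactSpace.isCompact_univ.ultrafilter_le_nhds
      (Ultrafilter.map (fun g : G => g • x₀) U) (by simp)
    have hyT : Filter.Tendsto (fun g : G => g • x₀) U (𝓝 y) := hy
    have h1 : Filter.Tendsto (fun g : G => π (g • x₀)) U (𝓝 (π y)) :=
      (hπc.tendsto y).comp hyT
    have h2 : Filter.Tendsto (fun g : G => π (g • x₀)) U (𝓝 (odoTau Γ hdec g₀)) := by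
      have h3 : Filter.Tendsto (odoTau Γ hdec) U (𝓝 (odoTau Γ hdec g₀)) :=
        Filter.tendsto_iff_comap.mpr hU
      exact h3.congr (fun g => (hπτ g).symm)
    have h4 : π y = odoTau Γ hdec g₀ := tendsto_nhds_unique h1 h2
    rwa [hfib y g₀ h4] at hyT
  have hfc : @Continuous G K
      (TopologicalSpace.induced (odoTau Γ hdec) inferInstance) inferInstance f :=
    @Continuous.comp G X K (TopologicalSpace.induced (odoTau Γ hdec) inferInstance) _ _
      (g := ψK) (f := fun g => g • x₀) hψKc horb
  -- the graph closure is the graph of π paired with ψK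
  have hGr : closure {q : Subodometer Γ × K | ∃ a : G, q = (odoTau Γ hdec a, f a)} =
      Set.range (fun x : X => (π x, ψK x)) := by
    apply Subset.antisymm
    · refine closure_minimal ?_ ((isCompact_range (hπc.prodMk hψKc)).isClosed)
      rintro q ⟨a, rfl⟩
      refine ⟨a • x₀, ?_⟩
      show (π (a • x₀), ψK (a • x₀)) = (odoTau Γ hdec a, f a)
      rw [hπτ]
    · rintro q ⟨x, rfl⟩
      have hxcl : x ∈ closure (Set.range fun g : G => g • x₀) := by
        rw [(hmin x₀).closure_eq]; trivial
      have himg := image_closure_subset_closure_image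
        (s := Set.range fun g : G => g • x₀) (hπc.prodMk hψKc)
      have h5 : (π x, ψK x) ∈
          closure ((fun x : X => (π x, ψK x)) '' (Set.range fun g : G => g • x₀)) :=
        himg (Set.mem_image_of_mem _ hxcl)
      refine closure_mono ?_ h5
      rintro q ⟨y, ⟨a, rfl⟩, rfl⟩
      refine ⟨a, ?_⟩
      show (π (a • x₀), ψK (a • x₀)) = (odoTau Γ hdec a, f a)
      rw [hπτ]
  -- separation
  have hsep : ∀ h₁ h₂ : Subodometer Γ, h₁ ≠ h₂ → ∃ g : G,
      {k : K | (g • h₁, k) ∈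
        closure {q : Subodometer Γ × K | ∃ a : G, q = (odoTau Γ hdec a, f a)}} ≠
      {k : K | (g • h₂, k) ∈
        closure {q : Subodometer Γ × K | ∃ a : G, q = (odoTau Γ hdec a, f a)}} := by
    intro h₁ h₂ hne
    refine ⟨1, ?_⟩
    rw [one_smul, one_smul, hGr]
    obtain ⟨x₁, hx₁⟩ := hπs h₁
    intro heq
    have hm1 : ψK x₁ ∈ {k : K | (h₁, k) ∈ Set.range (fun x : X => (π x, ψK x))} :=
      ⟨x₁, by show (π x₁, ψK x₁) = (h₁, ψK x₁); rw [hx₁]⟩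
    rw [heq] at hm1
    obtain ⟨x₂, hx₂⟩ := hm1
    have hx₂1 : π x₂ = h₂ := congrArg Prod.fst hx₂
    have hx₂2 : ψK x₂ = ψK x₁ := congrArg Prod.snd hx₂
    exact hne (by rw [← hx₁, ← hx₂1, hψKi hx₂2])
  refine ⟨K, inferInstance, ?_, f, ?_, ?_, φ, ?_, ?_, ?_, ?_⟩
  · exact inferInstance
  · exact hfc
  · exact hsep
  · exact continuous_pi (fun g => hψKc.comp (hc g))
  · intro x x' hxx
    have h1 := congrFun hxx 1
    show x = x'
    have : ψK ((1 : G) • x) = ψK ((1 : G) • x') := h1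
    rw [one_smul, one_smul] at this
    exact hψKi this
  · intro g x
    funext a
    show ψK (a • (g • x)) = ψK ((a * g) • x)
    rw [mul_smul]
  · have hforb : ∀ g : G, g • f = φ (g • x₀) := by
      intro g
      funext a
      show ψK ((a * g) • x₀) = ψK (a • (g • x₀))
      rw [mul_smul]
    have hφcont : Continuous φ := continuous_pi (fun g => hψKc.comp (hc g))
    apply Subset.antisymm
    · rintro β ⟨x, rfl⟩
      have hxcl : x ∈ closure (Set.range fun g : G => g • x₀) := by
        rw [(hmin x₀).closure_eq]; trivial
      have himg := image_closure_subset_closure_image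
        (s := Set.range fun g : G => g • x₀) hφcont
      have h5 : φ x ∈ closure (φ '' (Set.range fun g : G => g • x₀)) :=
        himg (Set.mem_image_of_mem _ hxcl)
      refine closure_mono ?_ h5
      rintro β ⟨y, ⟨a, rfl⟩, rfl⟩
      exact ⟨a, hforb a⟩
    · refine closure_minimal ?_ ((isCompact_range hφcont).isClosed)
      rintro β ⟨g, rfl⟩
      exact ⟨g • x₀, (hforb g).symm⟩

end Semico

/-- Theorem `semicociclo2`: a minimal system `(X, G)` admits an almost
1-1 factor map onto the subodometer `←G` with `|π⁻¹(e)| = 1` iff it is conjugate to the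
orbit-closure system `(Ω_G(f), G)` of a semicocycle `f` on `←G` invariant under no
rotation. -/
theorem statement13 {G X : Type*} [Group G] [Group.FG G] [TopologicalSpace G]
    [DiscreteTopology G] [MetricSpace X] [CompactSpace X] [MulAction G X]
    (hc : ∀ g : G, Continuous fun x : X => g • x)
    (hmin : ∀ x : X, Dense (Set.range fun g : G => g • x))
    (Γ : ℕ → Subgroup G) (hdec : ∀ n, Γ (n + 1) ≤ Γ n) (hfin : ∀ n, (Γ n).FiniteIndex)
    (htriv : (⋂ n, ((Γ n : Subgroup G) : Set G)) = {1}) :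
    (∃ π : X → Subodometer Γ, IsFactorMap G π ∧ ∃! x : X, π x = odoE Γ hdec)
      ↔ ∃ (K : Type) (_ : MetricSpace K), CompactSpace K ∧
          ∃ f : G → K,
            (@Continuous G K
              (TopologicalSpace.induced (odoTau Γ hdec) inferInstance) inferInstance f) ∧
            (∀ h₁ h₂ : Subodometer Γ, h₁ ≠ h₂ → ∃ g : G,
              {k : K | (g • h₁, k) ∈
                closure {q : Subodometer Γ × K | ∃ a : G, q = (odoTau Γ hdec a, f a)}} ≠
              {k : K | (g • h₂, k) ∈
                closure {q : Subodometer Γ × K | ∃ a : G, q = (odoTau Γ hdec a, f a)}}) ∧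
            ∃ φ : X → (G → K), Continuous φ ∧ Function.Injective φ ∧
              (∀ (g : G) (x : X), φ (g • x) = g • φ x) ∧
              Set.range φ = closure (Set.range fun g : G => g • f) := by
  constructor
  · rintro ⟨π, hπ, hex⟩
    exact forward_dir hc hmin Γ hdec π hπ hex
  · rintro ⟨K, instK, instKc, f, hf, hsep, φ, hφc, hφi, hφe, hφr⟩
    exact reverse_dir Γ hdec hfin f hf hsep φ hφc hφi hφe hφr
end

section
/- Let G be a discrete finitely generated group, Σ a finite alphabet, and x ∈ Σ^G. The following are equivalent: (1) x is a Toeplitz array; (2) there exists a decreasing sequence (Γ_n)_{n≥0} of finite-index subgroups of G such that G = ⋃_{n≥0} Per(x, Γ_n); (3) x is a regularly recurrent point of the shift system (Σ^G, G). -/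
open Pointwise MeasureTheory

/-- `Per(x, Γ, σ) = {g ∈ G : x (g γ) = σ for all γ ∈ Γ}`. -/
def PerSet {G A : Type*} [Group G] (x : G → A) (Γ : Subgroup G) (σ : A) : Set G :=
  {g : G | ∀ γ ∈ Γ, x (g * γ) = σ}

/-- `Per(x, Γ) = ⋃_σ Per(x, Γ, σ)`. -/
def Per {G A : Type*} [Group G] (x : G → A) (Γ : Subgroup G) : Set G :=
  ⋃ σ : A, PerSet x Γ σ

/-- `x` is a `G`-Toeplitz array if every `g ∈ G` belongs to `Per(x, Γ)` for some
finite-index subgroup `Γ`. -/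
def IsToeplitz {G A : Type*} [Group G] (x : G → A) : Prop :=
  ∀ g : G, ∃ Γ : Subgroup G, Γ.FiniteIndex ∧ g ∈ Per x Γ

/-- `Γ` is an essential group of periods of `x`: every `g ∈ G` with
`Per(x, Γ, σ) ⊆ Per(g • x, Γ, σ)` for all `σ` belongs to `Γ`. -/
def IsEssentialPeriodGroup {G A : Type*} [Group G] (x : G → A) (Γ : Subgroup G) : Prop :=
  ∀ g : G, (∀ σ : A, PerSet x Γ σ ⊆ PerSet (g • x) Γ σ) → g ∈ Γ


private lemma per_anti {G A : Type*} [Group G] (x : G → A) {Δ Γ : Subgroup G} (h : Δ ≤ Γ) :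
    Per x Γ ⊆ Per x Δ := by
  intro g hg
  obtain ⟨σ, hσ⟩ := Set.mem_iUnion.mp hg
  exact Set.mem_iUnion.mpr ⟨σ, fun γ hγ => hσ γ (h hγ)⟩

open Pointwise in
private lemma countable_of_fg (G : Type*) [Group G] [Group.FG G] : Countable G := by
  obtain ⟨S, hS, hfin⟩ := Group.fg_iff.mp ‹_›
  haveI : Finite ↥(S ∪ S⁻¹) := (hfin.union hfin.inv).to_subtype
  have hsurj : Function.Surjective
      (fun l : List ↥(S ∪ S⁻¹) => (l.map Subtype.val).prod) := by
    intro g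
    have hg : g ∈ Submonoid.closure (S ∪ S⁻¹) := by
      rw [← Subgroup.closure_toSubmonoid]
      exact hS ▸ Subgroup.mem_top g
    obtain ⟨l, hl, hprod⟩ := Submonoid.exists_list_of_mem_closure hg
    refine ⟨l.pmap (fun y hy => (⟨y, hy⟩ : ↥(S ∪ S⁻¹))) hl, ?_⟩
    simpa [List.map_pmap] using hprod
  exact hsurj.countable

/-- Proposition `toeplitz`: for `x ∈ Σ^G` the following are
equivalent: `x` is a Toeplitz array; there is a decreasing sequence of finite-index
subgroups `(Γₙ)` with `G = ⋃ₙ Per(x, Γₙ)`; `x` is a regularly recurrent point of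
`(Σ^G, G)`. -/
theorem statement14 {G A : Type*} [Group G] [Group.FG G] [Finite A]
    [TopologicalSpace A] [DiscreteTopology A] (x : G → A) :
    (IsToeplitz x ↔
      ∃ Γ : ℕ → Subgroup G, (∀ n, Γ (n + 1) ≤ Γ n) ∧ (∀ n, (Γ n).FiniteIndex) ∧
        (⋃ n, Per x (Γ n)) = Set.univ) ∧
    (IsToeplitz x ↔ RegularlyRecurrent G x) := by
  have key : IsToeplitz x ↔ RegularlyRecurrent G x := by
    constructor
    · intro ht V hV hxV
      obtain ⟨I, u, hu, hsub⟩ := isOpen_pi_iff.mp hV x hxV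
      choose Γg hΓfi hΓper using fun g : G => ht g
      have hΔfi : (⨅ g ∈ I, Γg g).FiniteIndex :=
        Subgroup.finiteIndex_iInf' _ (fun g _ => hΓfi g)
      refine ⟨⨅ g ∈ I, Γg g, hΔfi, ?_⟩
      intro γ hγ
      apply hsub
      intro g hgI
      have hmem : γ ∈ Γg g := biInf_le Γg hgI hγ
      obtain ⟨σ, hσ⟩ := Set.mem_iUnion.mp (hΓper g)
      have h1 : x g = σ := by simpa using hσ 1 (one_mem _)
      have h2 : x (g * γ) = σ := hσ γ hmem
      have heq : (γ • x) g = x g := by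
        show x (g * γ) = x g
        rw [h1, h2]
      rw [heq]
      exact (hu g hgI).2
    · intro hrr g
      have hopen : IsOpen {y : G → A | y g = x g} := by
        have heq : {y : G → A | y g = x g} = (fun y : G → A => y g) ⁻¹' {x g} := rfl
        rw [heq]
        exact (continuous_apply g).isOpen_preimage _ (isOpen_discrete _)
      obtain ⟨Γ, hΓfi, hΓ⟩ := hrr _ hopen rfl
      exact ⟨Γ, hΓfi, Set.mem_iUnion.mpr ⟨x g, fun γ hγ => hΓ hγ⟩⟩
  refine ⟨?_, key⟩
  constructor
  · intro ht
    haveI := countable_of_fg G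
    obtain ⟨e, he⟩ := exists_surjective_nat G
    choose Γ' hfi hper using fun n => ht (e n)
    refine ⟨fun n => ⨅ k : Fin (n + 1), Γ' k, ?_, ?_, ?_⟩
    · intro n
      exact le_iInf fun k =>
        iInf_le (fun j : Fin (n + 2) => Γ' j) ⟨k, Nat.lt_succ_of_lt k.isLt⟩
    · intro n
      exact Subgroup.finiteIndex_iInf fun i => hfi i
    · ext g
      simp only [Set.mem_iUnion, Set.mem_univ, iff_true]
      obtain ⟨n, rfl⟩ := he g
      exact ⟨n, per_anti x
        (iInf_le (fun k : Fin (n + 1) => Γ' k) ⟨n, Nat.lt_succ_self n⟩) (hper n)⟩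
  · rintro ⟨Γ, _, hfi, hcov⟩ g
    have hg : g ∈ ⋃ n, Per x (Γ n) := hcov ▸ Set.mem_univ g
    obtain ⟨n, hn⟩ := Set.mem_iUnion.mp hg
    exact ⟨Γ n, hfi n, hn⟩
end

section
/- Let G be a discrete finitely generated group, Σ a finite alphabet, and x ∈ Σ^G. If Γ is a finite-index subgroup of G which is a group of periods of x (i.e., Per(x, Γ) ≠ ∅), then there exists a finite-index subgroup K of G which is an essential group of periods of x and satisfies Per(x, Γ) ⊆ Per(x, K). -/
open Pointwise MeasureTheory

/-- Lemma `esencial`: any finite-index group of periods of `x` is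
contained (in the sense of period sets) in an essential group of periods of `x`. -/
theorem statement15 {G A : Type*} [Group G] [Group.FG G] [Finite A]
    (x : G → A) (Γ : Subgroup G) (hfin : Γ.FiniteIndex) (hper : (Per x Γ).Nonempty) :
    ∃ K : Subgroup G, K.FiniteIndex ∧ IsEssentialPeriodGroup x K ∧ Per x Γ ⊆ Per x K := by
  classical
  set N := Γ.normalCore with hN
  haveI : N.Normal := Subgroup.normalCore_normal Γ
  haveI : N.FiniteIndex := Subgroup.finiteIndex_normalCore Γ
  set P : A → Set G := fun σ => PerSet x N σ with hP
  -- P is closed under right multiplication by N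
  have hPN : ∀ σ, ∀ h ∈ P σ, ∀ n ∈ N, h * n ∈ P σ := by
    intro σ h hh n hn γ hγ
    rw [mul_assoc]
    exact hh _ (mul_mem hn hγ)
  -- the carrier
  set C : Set G := {g : G | ∀ σ, ∀ h ∈ P σ, h * g ∈ P σ} with hC
  have hpow : ∀ g ∈ C, ∀ k : ℕ, ∀ σ, ∀ h ∈ P σ, h * g ^ k ∈ P σ := by
    intro g hg k
    induction k with
    | zero => intro σ h hh; simpa using hh
    | succ k ih =>
      intro σ h hh
      have := hg σ _ (ih σ h hh)
      rwa [pow_succ, ← mul_assoc]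
  have hNC : ∀ n ∈ N, n ∈ C := fun n hn σ h hh => hPN σ h hh n hn
  have hinv : ∀ g ∈ C, g⁻¹ ∈ C := by
    intro g hg σ h hh
    set q : G ⧸ N := QuotientGroup.mk g with hq
    have hord : orderOf q ≠ 0 := (orderOf_pos q).ne'
    obtain ⟨m, hm⟩ : ∃ m, orderOf q = m + 1 := ⟨orderOf q - 1, (Nat.succ_pred_eq_of_pos (orderOf_pos q)).symm⟩
    have hgn : g ^ (m + 1) ∈ N := by
      have : q ^ (m + 1) = 1 := by rw [← hm]; exact pow_orderOf_eq_one q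
      rwa [hq, ← QuotientGroup.mk_pow, QuotientGroup.eq_one_iff] at this
    have h1 : h * g ^ m ∈ P σ := hpow g hg m σ h hh
    have h2 : h * g ^ m * (g ^ (m + 1))⁻¹ ∈ P σ :=
      hPN σ _ h1 _ (inv_mem hgn)
    have heq : h * g ^ m * (g ^ (m + 1))⁻¹ = h * g⁻¹ := by
      rw [pow_succ']
      rw [mul_inv_rev]
      rw [← mul_assoc]
      congr 1
      rw [mul_assoc, mul_inv_cancel, mul_one]
    rwa [heq] at h2
  set K : Subgroup G :=
    { carrier := C
      one_mem' := by intro σ h hh; simpa using hh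
      mul_mem' := by
        intro a b ha hb σ h hh
        rw [← mul_assoc]
        exact hb σ _ (ha σ h hh)
      inv_mem' := fun {a} ha => hinv a ha } with hK
  have hNK : N ≤ K := hNC
  haveI : K.FiniteIndex := Subgroup.finiteIndex_of_le hNK
  -- PerSet x K σ = P σ
  have hKP : ∀ σ, PerSet x K σ = P σ := by
    intro σ
    apply Set.Subset.antisymm
    · intro h hh γ hγ
      exact hh γ (hNK hγ)
    · intro h hh k hk
      have : h * k ∈ P σ := hk σ h hh
      simpa using this _ (one_mem N)
  refine ⟨K, inferInstance, ?_, ?_⟩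
  · -- essential
    intro g hg
    intro σ h hh
    have h1 : h ∈ PerSet (g • x) K σ := hg σ (by rwa [hKP σ])
    -- translate: ∀ γ ∈ N, x (h * γ * g) = σ
    have h2 : ∀ γ ∈ N, x (h * γ * g) = σ := fun γ hγ => h1 γ (hNK hγ)
    intro γ hγ
    have hγ' : g * γ * g⁻¹ ∈ N := Subgroup.Normal.conj_mem ‹N.Normal› γ hγ g
    have := h2 _ hγ'
    have harg : h * (g * γ * g⁻¹) * g = h * g * γ := by group
    rwa [harg] at this
  · -- Per x Γ ⊆ Per x K
    intro h hh
    simp only [Per, Set.mem_iUnion] at hh ⊢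
    obtain ⟨σ, hσ⟩ := hh
    refine ⟨σ, ?_⟩
    rw [hKP σ]
    intro γ hγ
    exact hσ γ (Subgroup.normalCore_le Γ hγ)
end

section
/- Let G be a discrete finitely generated group, Σ a finite alphabet, x ∈ Σ^G a Toeplitz array, and y ∈ Ω_G(x). If Γ is a finite-index subgroup of G which is an essential group of periods of y, then Ω_Γ(y) = C_Γ(y); moreover C_Γ(y) is clopen, g·C_Γ(y) = g'·C_Γ(y) whenever g and g' lie in the same left coset of Γ (so w·C_Γ(y) is well defined for w ∈ G/Γ), the set of return times of every point of C_Γ(y) to C_Γ(y) is exactly Γ, and the family {w·C_Γ(y) : w ∈ G/Γ} is a clopen partition of Ω_G(x). -/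
open Pointwise MeasureTheory

/-- `Ω_G(x)`: the closure of the `G`-orbit of `x` in `A^G`. -/
def OmegaG (G : Type*) {A : Type*} [Group G] [TopologicalSpace A] (x : G → A) : Set (G → A) :=
  closure (Set.range fun g : G => g • x)

lemma smul_mem_omegaG (G : Type*) {A : Type*} [Group G] [TopologicalSpace A] {x z : G → A}
    (g : G) (hz : z ∈ OmegaG G x) : g • z ∈ OmegaG G x := by
  unfold OmegaG at hz ⊢
  have hc : Continuous fun w : G → A => g • w := continuous_pi fun h => continuous_apply (h * g)
  have himg : (fun w : G → A => g • w) '' (Set.range fun h : G => h • x)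
      = Set.range fun h : G => h • x := by
    ext w; constructor
    · rintro ⟨_, ⟨h, rfl⟩, rfl⟩
      refine ⟨g * h, ?_⟩
      show (g * h) • x = g • (h • x)
      rw [mul_smul]
    · rintro ⟨h, rfl⟩
      refine ⟨(g⁻¹ * h) • x, ⟨g⁻¹ * h, rfl⟩, ?_⟩
      show g • ((g⁻¹ * h) • x) = h • x
      rw [← mul_smul, mul_inv_cancel_left]
  have h1 : g • z ∈ (fun w : G → A => g • w) '' closure (Set.range fun h : G => h • x) :=
    ⟨z, hz, rfl⟩
  have h2 := image_closure_subset_closure_image (f := fun w : G → A => g • w)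
    (s := Set.range fun h : G => h • x) hc
  rw [himg] at h2
  exact h2 h1

lemma self_mem_omegaG (G : Type*) {A : Type*} [Group G] [TopologicalSpace A] (x : G → A) :
    x ∈ OmegaG G x :=
  subset_closure ⟨1, one_smul G x⟩

/-- The subshift `Ω_G(x)` as a topological dynamical system. -/
def OmegaSub (G : Type*) {A : Type*} [Group G] [TopologicalSpace A] (x : G → A) : Type _ :=
  { z : G → A // z ∈ OmegaG G x }

instance (G : Type*) {A : Type*} [Group G] [TopologicalSpace A] (x : G → A) :
    TopologicalSpace (OmegaSub G x) :=
  instTopologicalSpaceSubtype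

instance (G : Type*) {A : Type*} [Group G] [TopologicalSpace A] (x : G → A) :
    MulAction G (OmegaSub G x) where
  smul g z := ⟨g • z.1, smul_mem_omegaG G g z.2⟩
  one_smul z := Subtype.ext (one_smul G z.1)
  mul_smul a b z := Subtype.ext (mul_smul a b z.1)

/-- `C_Γ(y)`: the set of elements of `Ω_G(x)` with exactly the same `Γ`-periodic parts
as `y`. -/
def CSet {G A : Type*} [Group G] [TopologicalSpace A] (x y : G → A) (Γ : Subgroup G) :
    Set (G → A) :=
  {z : G → A | z ∈ OmegaG G x ∧ ∀ σ : A, PerSet z Γ σ = PerSet y Γ σ}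

section Aux

variable {G A : Type*} [Group G] [TopologicalSpace A] [DiscreteTopology A]

lemma shift_apply (g : G) (z : G → A) (c : G) : (g • z) c = z (c * g) := rfl

/-- The shift by `g` as a homeomorphism of `A^G`. -/
def shiftHomeo (G A : Type*) [Group G] [TopologicalSpace A] (g : G) : (G → A) ≃ₜ (G → A) where
  toFun w := g • w
  invFun w := g⁻¹ • w
  left_inv w := inv_smul_smul g w
  right_inv w := smul_inv_smul g w
  continuous_toFun := continuous_pi fun h => continuous_apply (h * g)
  continuous_invFun := continuous_pi fun h => continuous_apply (h * g⁻¹)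

lemma shiftHomeo_image (g : G) (S : Set (G → A)) : (shiftHomeo G A g) '' S = g • S := rfl

lemma smul_closure_eq (g : G) (S : Set (G → A)) : closure (g • S) = g • closure S := by
  have h := (shiftHomeo G A g).image_closure S
  rw [shiftHomeo_image, shiftHomeo_image] at h
  exact h.symm

lemma isClosed_smul_set {S : Set (G → A)} (g : G) (hS : IsClosed S) : IsClosed (g • S) := by
  rw [← shiftHomeo_image g S]
  exact (shiftHomeo G A g).isClosed_image.mpr hS

lemma one_smul_set (S : Set (G → A)) : (1 : G) • S = S := by
  ext w; constructor
  · rintro ⟨c, hc, rfl⟩; simpa using hc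
  · intro hw; exact ⟨w, hw, one_smul _ _⟩

lemma isClosed_omegaG (x : G → A) : IsClosed (OmegaG G x) := isClosed_closure

end Aux

section MainLemmas

variable {G A : Type*} [Group G] [TopologicalSpace A] [DiscreteTopology A]
variable (x y : G → A) (Γ : Subgroup G)

/-- The closed superset of `CSet`: points whose periodic parts contain those of `y`. -/
def CPSet : Set (G → A) :=
  {z : G → A | z ∈ OmegaG G x ∧ ∀ σ : A, PerSet y Γ σ ⊆ PerSet z Γ σ}

variable {Γ}

lemma perSet_smul_of_mem {γ₀ : G} (hγ₀ : γ₀ ∈ Γ) (z : G → A) (σ : A) :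
    PerSet (γ₀ • z) Γ σ = PerSet z Γ σ := by
  ext h; constructor
  · intro hh γ hγ
    have h1 := hh (γ * γ₀⁻¹) (mul_mem hγ (inv_mem hγ₀))
    have h2 : (γ₀ • z) (h * (γ * γ₀⁻¹)) = z (h * γ) := by
      rw [shift_apply]
      congr 1
      group
    rwa [h2] at h1
  · intro hh γ hγ
    show z (h * γ * γ₀) = σ
    have := hh (γ * γ₀) (mul_mem hγ hγ₀)
    rwa [← mul_assoc] at this

lemma isClosed_perMem (h₀ : G) (σ : A) : IsClosed {z : G → A | h₀ ∈ PerSet z Γ σ} := by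
  have he : {z : G → A | h₀ ∈ PerSet z Γ σ} = ⋂ γ : Γ, {z : G → A | z (h₀ * (γ : G)) = σ} := by
    ext z
    simp only [Set.mem_setOf_eq, Set.mem_iInter, PerSet]
    exact ⟨fun h γ => h γ γ.2, fun h γ hγ => h ⟨γ, hγ⟩⟩
  rw [he]
  exact isClosed_iInter fun γ =>
    IsClosed.preimage (continuous_apply (h₀ * (γ : G))) isClosed_singleton

lemma isClosed_CPSet : IsClosed (CPSet x y Γ) := by
  have he : CPSet x y Γ = OmegaG G x ∩
      ⋂ (σ : A) (h : G) (_ : h ∈ PerSet y Γ σ), {z : G → A | h ∈ PerSet z Γ σ} := by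
    ext z
    simp only [CPSet, Set.mem_setOf_eq, Set.mem_inter_iff, Set.mem_iInter]
    exact ⟨fun ⟨h1, h2⟩ => ⟨h1, fun σ h hh => h2 σ hh⟩, fun ⟨h1, h2⟩ => ⟨h1, fun σ h hh => h2 σ h hh⟩⟩
  rw [he]
  exact (isClosed_omegaG x).inter (isClosed_iInter fun σ => isClosed_iInter fun h =>
    isClosed_iInter fun _ => isClosed_perMem h σ)

lemma CPSet_smul {γ : G} (hγ : γ ∈ Γ) {z : G → A} (hz : z ∈ CPSet x y Γ) :
    γ • z ∈ CPSet x y Γ :=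
  ⟨smul_mem_omegaG G γ hz.1, fun σ => by
    rw [perSet_smul_of_mem hγ]; exact hz.2 σ⟩

lemma CSet_smul {γ : G} (hγ : γ ∈ Γ) {z : G → A} (hz : z ∈ CSet x y Γ) :
    γ • z ∈ CSet x y Γ :=
  ⟨smul_mem_omegaG G γ hz.1, fun σ => by
    rw [perSet_smul_of_mem hγ]; exact hz.2 σ⟩

lemma y_mem_CSet (hy : y ∈ OmegaG G x) : y ∈ CSet x y Γ := ⟨hy, fun _ => rfl⟩

/-- Minimality: for any `z` in the orbit closure of a Toeplitz array, the orbit closure of `z`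
contains the whole orbit closure of `x`. -/
lemma min_lemma (hx : IsToeplitz x) {z : G → A} (hz : z ∈ OmegaG G x) :
    OmegaG G x ⊆ closure (Set.range fun g : G => g • z) := by
  have hxcl : x ∈ closure (Set.range fun g : G => g • z) := by
    rw [mem_closure_iff]
    intro O hO hxO
    obtain ⟨I, u, hu, hIu⟩ := isOpen_pi_iff.mp hO x hxO
    choose Γf hΓfin hΓper using hx
    haveI : ∀ f : I, (Γf (f : G)).FiniteIndex := fun f => hΓfin (f : G)
    set Λ : Subgroup G := ⨅ f : I, Γf (f : G) with hΛ
    haveI : Λ.FiniteIndex := Subgroup.finiteIndex_iInf fun f => hΓfin (f : G)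
    haveI : Finite (G ⧸ Λ) := Λ.finite_quotient_of_finiteIndex
    set E : Set G := ⋃ q : G ⧸ Λ, (fun f => f * (Quotient.out q)⁻¹) '' (I : Set G) with hE
    have hEfin : E.Finite := Set.finite_iUnion fun q => I.finite_toSet.image _
    have hOE : IsOpen {w : G → A | ∀ e ∈ E, w e = z e} := by
      have he : {w : G → A | ∀ e ∈ E, w e = z e} = ⋂ e ∈ E, {w : G → A | w e = z e} := by
        ext w; simp
      rw [he]
      refine hEfin.isOpen_biInter fun e _ => ?_
      have h' : {w : G → A | w e = z e} = (fun w : G → A => w e) ⁻¹' {z e} := rfl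
      rw [h']
      exact (isOpen_discrete _).preimage (continuous_apply e)
    have hzOE : z ∈ {w : G → A | ∀ e ∈ E, w e = z e} := fun e _ => rfl
    have hz' : z ∈ closure (Set.range fun g : G => g • x) := hz
    obtain ⟨w, hwO, hwr⟩ := mem_closure_iff.mp hz' _ hOE hzOE
    obtain ⟨g₀, rfl⟩ := hwr
    set s : G := Quotient.out (QuotientGroup.mk (s := Λ) g₀) with hs
    have hout : (QuotientGroup.mk (s := Λ) s) = QuotientGroup.mk (s := Λ) g₀ :=
      Quotient.out_eq _
    have hslam : s⁻¹ * g₀ ∈ Λ := QuotientGroup.eq.mp hout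
    refine ⟨s⁻¹ • z, hIu fun f hf => ?_, ⟨s⁻¹, rfl⟩⟩
    have h1 : (s⁻¹ • z) f = z (f * s⁻¹) := rfl
    have h2 : f * s⁻¹ ∈ E := Set.mem_iUnion.mpr ⟨QuotientGroup.mk (s := Λ) g₀, ⟨f, hf, rfl⟩⟩
    have h3 : x (f * s⁻¹ * g₀) = z (f * s⁻¹) := hwO _ h2
    have h4 : x (f * (s⁻¹ * g₀)) = x f := by
      obtain ⟨σ, hσ⟩ := Set.mem_iUnion.mp (hΓper f)
      have hΛle : Λ ≤ Γf f := iInf_le (fun f : I => Γf (f : G)) (⟨f, hf⟩ : I)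
      have e1 : x (f * (s⁻¹ * g₀)) = σ := hσ _ (hΛle hslam)
      have e2 : x f = σ := by simpa using hσ 1 (one_mem _)
      rw [e1, e2]
    have h5 : (s⁻¹ • z) f = x f := by
      rw [h1, ← h3, mul_assoc, h4]
    rw [h5]
    exact (hu f hf).2
  have hall : ∀ g : G, g • x ∈ closure (Set.range fun g : G => g • z) := by
    intro g
    have h1 : g • x ∈ g • closure (Set.range fun g : G => g • z) := ⟨x, hxcl, rfl⟩
    rw [← smul_closure_eq] at h1
    refine closure_mono ?_ h1
    rintro _ ⟨_, ⟨h, rfl⟩, rfl⟩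
    exact ⟨g * h, by show (g * h) • z = g • (h • z); exact mul_smul g h z⟩
  exact closure_minimal (by rintro _ ⟨g, rfl⟩; exact hall g) isClosed_closure

variable (Γ)

lemma split_lemma (hfin : Γ.FiniteIndex) (z y' : G → A) (S : Set G)
    (hy' : y' ∈ closure ((fun g : G => g • z) '' S)) :
    ∃ u ∈ S, y' ∈ closure ((fun g : G => g • z) '' {g : G | u⁻¹ * g ∈ Γ}) := by
  haveI : Finite (G ⧸ Γ) := Γ.finite_quotient_of_finiteIndex
  have hdec : (fun g : G => g • z) '' S ⊆
      ⋃ q : G ⧸ Γ, closure ((fun g : G => g • z) '' (S ∩ QuotientGroup.mk ⁻¹' {q})) := by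
    rintro _ ⟨g, hg, rfl⟩
    exact Set.mem_iUnion.mpr ⟨QuotientGroup.mk g, subset_closure ⟨g, ⟨hg, rfl⟩, rfl⟩⟩
  have hclosed : IsClosed
      (⋃ q : G ⧸ Γ, closure ((fun g : G => g • z) '' (S ∩ QuotientGroup.mk ⁻¹' {q}))) :=
    isClosed_iUnion_of_finite fun q => isClosed_closure
  obtain ⟨q, hq⟩ := Set.mem_iUnion.mp (closure_minimal hdec hclosed hy')
  have hne : (S ∩ QuotientGroup.mk ⁻¹' {q}).Nonempty := by
    by_contra h
    rw [Set.not_nonempty_iff_eq_empty] at h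
    rw [h] at hq
    simp at hq
  obtain ⟨u, huS, huq⟩ := hne
  refine ⟨u, huS, closure_mono (Set.image_mono ?_) hq⟩
  rintro g ⟨_, hgq⟩
  have hq1 : QuotientGroup.mk (s := Γ) u = QuotientGroup.mk g := by
    rw [huq, hgq]
  exact QuotientGroup.eq.mp hq1

lemma coset_image (z : G → A) (u : G) :
    (fun g : G => g • z) '' {g : G | u⁻¹ * g ∈ Γ} =
      u • ((fun g : G => g • z) '' (Γ : Set G)) := by
  ext w; constructor
  · rintro ⟨g, hg, rfl⟩
    refine ⟨(u⁻¹ * g) • z, ⟨u⁻¹ * g, hg, rfl⟩, ?_⟩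
    show u • ((u⁻¹ * g) • z) = g • z
    rw [← mul_smul, mul_inv_cancel_left]
  · rintro ⟨_, ⟨γ, hγ, rfl⟩, rfl⟩
    refine ⟨u * γ, ?_, by show (u * γ) • z = u • (γ • z); exact mul_smul u γ z⟩
    simpa [inv_mul_cancel_left] using hγ

variable {x y}

lemma lemA (hess : IsEssentialPeriodGroup y Γ) (z : G → A)
    (hcl : closure ((fun g : G => g • z) '' (Γ : Set G)) ⊆ CPSet x y Γ) (u : G)
    (hu : y ∈ closure ((fun g : G => g • z) '' {g : G | u⁻¹ * g ∈ Γ})) :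
    u ∈ Γ ∧ y ∈ closure ((fun g : G => g • z) '' (Γ : Set G)) := by
  have hu' := hu
  rw [coset_image, smul_closure_eq] at hu'
  obtain ⟨c, hc, hcu⟩ := hu'
  have hceq : c = u⁻¹ • y := by rw [← hcu, inv_smul_smul]
  have hcp : u⁻¹ • y ∈ CPSet x y Γ := hcl (hceq ▸ hc)
  have hUinv : u⁻¹ ∈ Γ := hess u⁻¹ hcp.2
  have hU : u ∈ Γ := (inv_mem_iff (H := Γ)).mp hUinv
  refine ⟨hU, ?_⟩
  have hset : {g : G | u⁻¹ * g ∈ Γ} = (Γ : Set G) := by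
    ext g
    simp only [Set.mem_setOf_eq, SetLike.mem_coe]
    constructor
    · intro h
      have := mul_mem hU h
      rwa [mul_inv_cancel_left] at this
    · intro h; exact mul_mem hUinv h
  rwa [hset] at hu

lemma claimW (hx : IsToeplitz x) (hy : y ∈ OmegaG G x) (hfin : Γ.FiniteIndex)
    (hess : IsEssentialPeriodGroup y Γ)
    (z : G → A) (hz : z ∈ CPSet x y Γ) :
    y ∈ closure ((fun g : G => g • z) '' (Γ : Set G)) := by
  have hmin : y ∈ closure (Set.range fun g : G => g • z) := min_lemma x hx hz.1 hy
  rw [← Set.image_univ] at hmin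
  obtain ⟨u, -, hu⟩ := split_lemma Γ hfin z y Set.univ hmin
  have hcl : closure ((fun g : G => g • z) '' (Γ : Set G)) ⊆ CPSet x y Γ :=
    closure_minimal (by rintro _ ⟨γ, hγ, rfl⟩; exact CPSet_smul x y hγ hz) (isClosed_CPSet x y)
  exact (lemA Γ hess z hcl u hu).2

lemma claimE (hx : IsToeplitz x) (hy : y ∈ OmegaG G x) (hfin : Γ.FiniteIndex)
    (hess : IsEssentialPeriodGroup y Γ)
    (z : G → A) (hz : z ∈ CPSet x y Γ) (σ : A) : PerSet z Γ σ ⊆ PerSet y Γ σ := by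
  intro h₀ hh₀
  have hW := claimW Γ hx hy hfin hess z hz
  have hsub : (fun g : G => g • z) '' (Γ : Set G) ⊆ {u : G → A | h₀ ∈ PerSet u Γ σ} := by
    rintro _ ⟨γ, hγ, rfl⟩
    rw [Set.mem_setOf_eq, perSet_smul_of_mem hγ]
    exact hh₀
  exact closure_minimal hsub (isClosed_perMem h₀ σ) hW

lemma CPSet_eq_CSet (hx : IsToeplitz x) (hy : y ∈ OmegaG G x) (hfin : Γ.FiniteIndex)
    (hess : IsEssentialPeriodGroup y Γ) : CPSet x y Γ = CSet x y Γ := by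
  ext z; constructor
  · rintro ⟨h1, h2⟩
    exact ⟨h1, fun σ =>
      Set.Subset.antisymm (claimE Γ hx hy hfin hess z ⟨h1, h2⟩ σ) (h2 σ)⟩
  · rintro ⟨h1, h2⟩
    exact ⟨h1, fun σ => le_of_eq (h2 σ).symm⟩

lemma closure_orbit_subset_CSet (hx : IsToeplitz x) (hy : y ∈ OmegaG G x)
    (hfin : Γ.FiniteIndex) (hess : IsEssentialPeriodGroup y Γ) :
    closure ((fun g : G => g • y) '' (Γ : Set G)) ⊆ CSet x y Γ := by
  rw [← CPSet_eq_CSet Γ hx hy hfin hess]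
  exact closure_minimal
    (by rintro _ ⟨γ, hγ, rfl⟩; exact CPSet_smul x y hγ ⟨hy, fun σ => subset_rfl⟩)
    (isClosed_CPSet x y)

lemma diamondWeak (hx : IsToeplitz x) (hy : y ∈ OmegaG G x) (hfin : Γ.FiniteIndex)
    (hess : IsEssentialPeriodGroup y Γ) (z : G → A) (w : G)
    (hz : z ∈ closure ((fun g : G => g • y) '' (Γ : Set G)))
    (hwz : w • z ∈ CSet x y Γ) : w ∈ Γ := by
  have hwzCP : w • z ∈ CPSet x y Γ := by
    rw [CPSet_eq_CSet Γ hx hy hfin hess]; exact hwz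
  have h1 : y ∈ closure ((fun g : G => g • (w • z)) '' (Γ : Set G)) :=
    claimW Γ hx hy hfin hess (w • z) hwzCP
  set T : Set G := {g : G | ∃ γ₁ ∈ Γ, ∃ γ₂ ∈ Γ, g = γ₁ * w * γ₂} with hT
  have h2 : (fun g : G => g • (w • z)) '' (Γ : Set G) ⊆
      closure ((fun g : G => g • y) '' T) := by
    rintro _ ⟨γ, hγ, rfl⟩
    show γ • (w • z) ∈ closure ((fun g : G => g • y) '' T)
    have e1 : γ • (w • z) = (γ * w) • z := (mul_smul γ w z).symm
    rw [e1]
    have h3 : (γ * w) • z ∈ (γ * w) • closure ((fun g : G => g • y) '' (Γ : Set G)) :=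
      ⟨z, hz, rfl⟩
    rw [← smul_closure_eq] at h3
    refine closure_mono ?_ h3
    rintro _ ⟨_, ⟨δ, hδ, rfl⟩, rfl⟩
    exact ⟨γ * w * δ, ⟨γ, hγ, δ, hδ, rfl⟩, by show (γ * w * δ) • y = (γ * w) • (δ • y); exact mul_smul (γ * w) δ y⟩
  have h4 : y ∈ closure ((fun g : G => g • y) '' T) :=
    closure_minimal h2 isClosed_closure h1
  obtain ⟨u, huT, hu⟩ := split_lemma Γ hfin y y T h4
  have hcl : closure ((fun g : G => g • y) '' (Γ : Set G)) ⊆ CPSet x y Γ :=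
    closure_minimal
      (by rintro _ ⟨γ, hγ, rfl⟩; exact CPSet_smul x y hγ ⟨hy, fun σ => subset_rfl⟩)
      (isClosed_CPSet x y)
  have hU := (lemA Γ hess y hcl u hu).1
  obtain ⟨γ₁, hγ₁, γ₂, hγ₂, rfl⟩ := huT
  have hw : γ₁⁻¹ * (γ₁ * w * γ₂) * γ₂⁻¹ = w := by group
  have := mul_mem (mul_mem (inv_mem hγ₁) hU) (inv_mem hγ₂)
  rwa [hw] at this

lemma CSet_eq_closure_orbit (hx : IsToeplitz x) (hy : y ∈ OmegaG G x)
    (hfin : Γ.FiniteIndex) (hess : IsEssentialPeriodGroup y Γ) :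
    closure ((fun g : G => g • y) '' (Γ : Set G)) = CSet x y Γ := by
  apply Set.Subset.antisymm (closure_orbit_subset_CSet Γ hx hy hfin hess)
  intro c hc
  have hmin : c ∈ closure (Set.range fun g : G => g • y) := min_lemma x hx hy hc.1
  rw [← Set.image_univ] at hmin
  obtain ⟨v, -, hvc⟩ := split_lemma Γ hfin y c Set.univ hmin
  rw [coset_image, smul_closure_eq] at hvc
  obtain ⟨c', hc', hvc'⟩ := hvc
  have hv : v ∈ Γ := diamondWeak Γ hx hy hfin hess c' v hc'
    (by rw [show v • c' = c from hvc']; exact hc)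
  rw [← hvc']
  have h3 : v • c' ∈ v • closure ((fun g : G => g • y) '' (Γ : Set G)) := ⟨c', hc', rfl⟩
  rw [← smul_closure_eq] at h3
  refine closure_mono ?_ h3
  rintro _ ⟨_, ⟨γ, hγ, rfl⟩, rfl⟩
  exact ⟨v * γ, mul_mem hv hγ, by show (v * γ) • y = v • (γ • y); exact mul_smul v γ y⟩

lemma diamond (hx : IsToeplitz x) (hy : y ∈ OmegaG G x)
    (hfin : Γ.FiniteIndex) (hess : IsEssentialPeriodGroup y Γ) {z : G → A} {w : G}
    (hz : z ∈ CSet x y Γ) (hwz : w • z ∈ CSet x y Γ) : w ∈ Γ := by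
  refine diamondWeak Γ hx hy hfin hess z w ?_ hwz
  rw [CSet_eq_closure_orbit Γ hx hy hfin hess]
  exact hz

lemma smul_CSet {γ : G} (hγ : γ ∈ Γ) : γ • CSet x y Γ = CSet x y Γ := by
  apply Set.Subset.antisymm
  · rintro _ ⟨c, hc, rfl⟩; exact CSet_smul x y hγ hc
  · intro c hc
    exact ⟨γ⁻¹ • c, CSet_smul x y (inv_mem hγ) hc, smul_inv_smul γ c⟩

lemma smul_set_assoc (g h : G) (S : Set (G → A)) : (g * h) • S = g • (h • S) := by
  ext w; constructor
  · rintro ⟨c, hc, rfl⟩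
    exact ⟨h • c, ⟨c, hc, rfl⟩, (mul_smul g h c).symm⟩
  · rintro ⟨_, ⟨c, hc, rfl⟩, rfl⟩
    exact ⟨c, hc, mul_smul g h c⟩

end MainLemmas

/-- Proposition `particion`: for `y ∈ Ω_G(x)` and `Γ` an essential
group of periods of `y`, one has `Ω_Γ(y) = C_Γ(y)`, the set `C_Γ(y)` is relatively
clopen, its translates are well defined on cosets, its return times are exactly `Γ`, and
`{w ⬝ C_Γ(y)}_{w ∈ G/Γ}` is a clopen partition of `Ω_G(x)`. -/
theorem statement17 {G A : Type*} [Group G] [Group.FG G] [Finite A]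
    [TopologicalSpace A] [DiscreteTopology A]
    (x : G → A) (hx : IsToeplitz x) (y : G → A) (hy : y ∈ OmegaG G x)
    (Γ : Subgroup G) (hfin : Γ.FiniteIndex) (hess : IsEssentialPeriodGroup y Γ) :
    closure ((fun g : G => g • y) '' (Γ : Set G)) = CSet x y Γ ∧
    IsClosed (CSet x y Γ) ∧
    (∃ U : Set (G → A), IsOpen U ∧ CSet x y Γ = U ∩ OmegaG G x) ∧
    (∀ g g' : G, g⁻¹ * g' ∈ Γ → g • CSet x y Γ = g' • CSet x y Γ) ∧
    (∀ z ∈ CSet x y Γ, ReturnTimes G z (CSet x y Γ) = (Γ : Set G)) ∧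
    (∀ g g' : G, g⁻¹ * g' ∉ Γ → Disjoint (g • CSet x y Γ) (g' • CSet x y Γ)) ∧
    (⋃ g : G, g • CSet x y Γ) = OmegaG G x := by
  haveI : Γ.FiniteIndex := hfin
  haveI : Finite (G ⧸ Γ) := Γ.finite_quotient_of_finiteIndex
  have h1 : closure ((fun g : G => g • y) '' (Γ : Set G)) = CSet x y Γ :=
    CSet_eq_closure_orbit Γ hx hy hfin hess
  have h2 : IsClosed (CSet x y Γ) := by
    rw [← CPSet_eq_CSet Γ hx hy hfin hess]
    exact isClosed_CPSet x y
  -- translates well-defined on cosets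
  have h4 : ∀ g g' : G, g⁻¹ * g' ∈ Γ → g • CSet x y Γ = g' • CSet x y Γ := by
    intro g g' hgg'
    have e1 : g • ((g⁻¹ * g') • CSet x y Γ) = g' • CSet x y Γ := by
      rw [← smul_set_assoc, mul_inv_cancel_left]
    rw [smul_CSet Γ hgg'] at e1
    exact e1
  -- return times
  have h5 : ∀ z ∈ CSet x y Γ, ReturnTimes G z (CSet x y Γ) = (Γ : Set G) := by
    intro z hz
    ext g
    simp only [ReturnTimes, Set.mem_setOf_eq, SetLike.mem_coe]
    constructor
    · intro hg
      exact diamond Γ hx hy hfin hess hz hg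
    · intro hg
      exact CSet_smul x y hg hz
  -- disjointness
  have h6 : ∀ g g' : G, g⁻¹ * g' ∉ Γ → Disjoint (g • CSet x y Γ) (g' • CSet x y Γ) := by
    intro g g' hno
    rw [Set.disjoint_left]
    rintro u ⟨c, hc, rfl⟩ ⟨c', hc', heq⟩
    have hcc : (g'⁻¹ * g) • c = c' := by
      rw [mul_smul, ← show g' • c' = g • c from heq, inv_smul_smul]
    have hmem : (g'⁻¹ * g) ∈ Γ := diamond Γ hx hy hfin hess hc (hcc.symm ▸ hc')
    exact hno (by simpa using inv_mem hmem)
  -- covering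
  have h7 : (⋃ g : G, g • CSet x y Γ) = OmegaG G x := by
    apply Set.Subset.antisymm
    · rintro u hu
      obtain ⟨S, ⟨g, rfl⟩, c, hc, rfl⟩ := hu
      exact smul_mem_omegaG G g hc.1
    · intro u hu
      have hmin : u ∈ closure (Set.range fun g : G => g • y) := min_lemma x hx hy hu
      rw [← Set.image_univ] at hmin
      obtain ⟨v, -, hv⟩ := split_lemma Γ hfin y u Set.univ hmin
      rw [coset_image, smul_closure_eq, h1] at hv
      exact Set.mem_iUnion.mpr ⟨v, hv⟩
  -- relative clopenness
  have h3 : ∃ U : Set (G → A), IsOpen U ∧ CSet x y Γ = U ∩ OmegaG G x := by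
    have houtiff : ∀ q : G ⧸ Γ, Quotient.out q ∈ Γ ↔ q = QuotientGroup.mk (1 : G) := by
      intro q
      have hout : (QuotientGroup.mk (Quotient.out q) : G ⧸ Γ) = q := Quotient.out_eq q
      constructor
      · intro h
        exact hout.symm.trans (QuotientGroup.eq.mpr (by simpa using inv_mem h))
      · intro h
        have h2 := QuotientGroup.eq.mp (hout.trans h)
        rw [mul_one] at h2
        exact inv_mem_iff.mp h2
    have hcov : OmegaG G x = ⋃ q : G ⧸ Γ, Quotient.out q • CSet x y Γ := by
      apply Set.Subset.antisymm
      · intro u hu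
        rw [← h7] at hu
        obtain ⟨S, ⟨g, rfl⟩, hg⟩ := hu
        have he : g • CSet x y Γ = Quotient.out (QuotientGroup.mk (s := Γ) g) • CSet x y Γ :=
          h4 g _ (QuotientGroup.eq.mp (Quotient.out_eq _).symm)
        refine Set.mem_iUnion.mpr ⟨QuotientGroup.mk g, ?_⟩
        show u ∈ Quotient.out (QuotientGroup.mk (s := Γ) g) • CSet x y Γ
        rw [← he]
        exact hg
      · intro u hu
        obtain ⟨S, ⟨q, rfl⟩, c, hc, rfl⟩ := hu
        exact smul_mem_omegaG G _ hc.1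
    set D : Set (G → A) :=
      ⋃ q : {q : G ⧸ Γ // q ≠ QuotientGroup.mk (1 : G)}, Quotient.out (q : G ⧸ Γ) • CSet x y Γ
      with hD
    have hDclosed : IsClosed D :=
      isClosed_iUnion_of_finite fun q => isClosed_smul_set _ h2
    refine ⟨Dᶜ, hDclosed.isOpen_compl, ?_⟩
    apply Set.Subset.antisymm
    · intro u hu
      refine ⟨?_, hu.1⟩
      intro huD
      obtain ⟨S, ⟨q, rfl⟩, hq⟩ := huD
      have hne : ((Quotient.out (q : G ⧸ Γ))⁻¹ * 1) ∉ Γ := by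
        intro hmem
        rw [mul_one] at hmem
        exact q.2 ((houtiff _).mp (inv_mem_iff.mp hmem))
      have hdisj := h6 _ 1 hne
      rw [Set.disjoint_left] at hdisj
      exact hdisj hq ⟨u, hu, by show (1 : G) • u = u; exact one_smul G u⟩
    · rintro u ⟨huD, huΩ⟩
      rw [hcov] at huΩ
      obtain ⟨S, ⟨q, rfl⟩, hq⟩ := huΩ
      by_cases hq1 : q = QuotientGroup.mk (1 : G)
      · have hmem : Quotient.out q ∈ Γ := (houtiff q).mpr hq1
        obtain ⟨c, hc, hcu⟩ := hq
        exact (show Quotient.out q • c = u from hcu) ▸ CSet_smul x y hmem hc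
      · exact absurd (Set.mem_iUnion.mpr ⟨⟨q, hq1⟩, hq⟩) huD
  exact ⟨h1, h2, h3, h4, h5, h6, h7⟩
end
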